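/- arXiv:1808.04995 — 6 statements merged into one kernel-verified Lean document; each statement's English description precedes it below -/
import Mathlib

section
/- Fix k ≥ 2 and n ≥ m ≥ 1. Let q : ({0,1}^n)^k → {0,1} be the indicator of the event that the XOR ⊕_{e=1}^k z_e restricted to its first m bits is either 0^m or 1^m. Then the Fourier coefficient q̂(S) equals 2^{1−m} if S = (s0^{n−m}, …, s0^{n−m}) for some s ∈ {0,1}^m of even Hamming weight (the same s repeated k times, padded with zeros), and q̂(S) = 0 for all other S ∈ ({0,1}^n)^k. -/
open Finset

/-- Boolean Fourier transform on `({0,1}^n)^k`, identified with `{0,1}^{kn}`. -/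
noncomputable def fourP {k n : ℕ} (f : (Fin k → Fin n → Bool) → ℝ)
    (s : Fin k → Fin n → Bool) : ℝ :=
  ((2 : ℝ) ^ (k * n))⁻¹ *
    ∑ z : Fin k → Fin n → Bool,
      f z * (-1 : ℝ) ^
        (univ.filter fun p : Fin k × Fin n => s p.1 p.2 = true ∧ z p.1 p.2 = true).card

/-- Bit `j < m` of the XOR `⊕_e z_e`. -/
def xorBit {k n m : ℕ} (hmn : m ≤ n) (Z : Fin k → Fin n → Bool) (j : Fin m) : Prop :=
  (univ.filter fun e : Fin k => Z e (Fin.castLE hmn j) = true).card % 2 = 1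

instance {k n m : ℕ} (hmn : m ≤ n) (Z : Fin k → Fin n → Bool) (j : Fin m) :
    Decidable (xorBit hmn Z j) := by unfold xorBit; infer_instance

/-- Indicator that the first `m` bits of `⊕_e z_e` are all `0` or all `1`. -/
def qInd {k n m : ℕ} (hmn : m ≤ n) (Z : Fin k → Fin n → Bool) : ℝ :=
  if (∀ j : Fin m, xorBit hmn Z j) ∨ (∀ j : Fin m, ¬ xorBit hmn Z j) then 1 else 0

/-- The `k`-fold repetition of `s ∈ {0,1}^m` padded with zeros to length `n`. -/
def padRep {k n m : ℕ} (s : Fin m → Bool) : Fin k → Fin n → Bool :=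
  fun _ j => if h : (j : ℕ) < m then s ⟨j, h⟩ else false

section Aux

noncomputable def chiP {α : Type*} [Fintype α] (S Z : α → Bool) : ℝ :=
  ∏ a, (if S a ∧ Z a then (-1:ℝ) else 1)

lemma prod_ite_neg {α : Type*} [Fintype α] (P : α → Prop) [DecidablePred P] :
    ∏ a, (if P a then (-1:ℝ) else 1) = (-1)^(univ.filter P).card := by
  rw [Finset.prod_ite, Finset.prod_const, Finset.prod_const, one_pow, mul_one]

lemma sum_fun_prod {β : Type*} [Fintype β] [DecidableEq β] (g : β → Bool → ℝ) :
    ∑ F : β → Bool, ∏ b, g b (F b) = ∏ b, (g b false + g b true) := by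
  have h := Finset.prod_univ_sum (fun _ : β => (univ : Finset Bool)) (fun b c => g b c)
  rw [Fintype.piFinset_univ] at h
  rw [← h]
  exact Finset.prod_congr rfl fun b _ => by rw [Fintype.sum_bool]; ring

lemma sum_chiP {α : Type*} [Fintype α] [DecidableEq α] (S : α → Bool) :
    ∑ Z : α → Bool, chiP S Z = if (∀ a, S a = false) then (2:ℝ)^(Fintype.card α) else 0 := by
  unfold chiP
  rw [sum_fun_prod (fun a b => if S a ∧ b then (-1:ℝ) else 1)]
  by_cases h : ∀ a, S a = false
  · rw [if_pos h]
    rw [← Finset.card_univ, ← Finset.prod_const]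
    exact Finset.prod_congr rfl fun a _ => by simp [h a]; norm_num
  · rw [if_neg h]
    push_neg at h
    obtain ⟨a, ha⟩ := h
    apply Finset.prod_eq_zero (Finset.mem_univ a)
    have : S a = true := by revert ha; cases S a <;> simp
    simp [this]

lemma chiP_mul {α : Type*} [Fintype α] (S T Z : α → Bool) :
    chiP S Z * chiP T Z = chiP (fun a => xor (S a) (T a)) Z := by
  unfold chiP
  rw [← Finset.prod_mul_distrib]
  exact Finset.prod_congr rfl fun a _ => by
    cases hS : S a <;> cases hT : T a <;> cases hZ : Z a <;> simp [hS, hT, hZ]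

lemma orth {α : Type*} [Fintype α] [DecidableEq α] (S T : α → Bool) :
    ∑ Z : α → Bool, chiP S Z * chiP T Z = if S = T then (2:ℝ)^(Fintype.card α) else 0 := by
  simp_rw [chiP_mul]
  rw [sum_chiP]
  congr 1
  simp only [eq_iff_iff]
  constructor
  · intro h; funext a; have := h a; revert this; cases S a <;> cases T a <;> simp
  · intro h a; rw [h]; cases T a <;> simp

def uc {k n : ℕ} (S : Fin k → Fin n → Bool) : Fin k × Fin n → Bool := fun p => S p.1 p.2

lemma uc_inj {k n : ℕ} {S T : Fin k → Fin n → Bool} (h : uc S = uc T) : S = T :=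
  funext fun a => funext fun b => congrFun h (a, b)

lemma chiP_padRep {k n m : ℕ} (hmn : m ≤ n) (t : Fin m → Bool) (Z : Fin k → Fin n → Bool) :
    chiP (uc (padRep t)) (uc Z) =
      ∏ j : Fin m, (if t j ∧ xorBit hmn Z j then (-1:ℝ) else 1) := by
  let F : ℕ → ℝ := fun i =>
    if h : i < m then (if t ⟨i, h⟩ ∧ xorBit hmn Z ⟨i, h⟩ then (-1:ℝ) else 1) else 1
  unfold chiP uc
  rw [Fintype.prod_prod_type, Finset.prod_comm]
  have step1 : ∀ i : Fin n,
      (∏ e : Fin k, (if padRep (k := k) t e i ∧ Z e i then (-1:ℝ) else 1)) = F i.val := by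
    intro i
    by_cases h : (i : ℕ) < m
    · have hp : ∀ e : Fin k, padRep (k := k) t e i = t ⟨i, h⟩ := fun e => dif_pos h
      show _ = if h' : (i:ℕ) < m then _ else _
      rw [dif_pos h]
      by_cases ht : t ⟨i, h⟩ = true
      · simp only [hp, ht, true_and]
        have hc : Fin.castLE hmn ⟨(i:ℕ), h⟩ = i := rfl
        rw [prod_ite_neg (fun e : Fin k => Z e i = true)]
        unfold xorBit
        simp only [hc]
        rcases Nat.even_or_odd (univ.filter fun e : Fin k => Z e i = true).card with he | ho
        · rw [he.neg_one_pow, if_neg]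
          rw [Nat.even_iff] at he; omega
        · rw [ho.neg_one_pow, if_pos]
          rwa [Nat.odd_iff] at ho
      · have ht' : t ⟨i, h⟩ = false := by revert ht; cases t ⟨i, h⟩ <;> simp
        simp [hp, ht']
    · have hp : ∀ e : Fin k, padRep (k := k) t e i = false := fun e => dif_neg h
      show _ = if h' : (i:ℕ) < m then _ else _
      rw [dif_neg h]
      simp [hp]
  calc (∏ i : Fin n, ∏ e : Fin k, (if padRep (k := k) t e i ∧ Z e i then (-1:ℝ) else 1))
      = ∏ i : Fin n, F i.val := Finset.prod_congr rfl fun i _ => step1 i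
    _ = ∏ i ∈ range n, F i := Fin.prod_univ_eq_prod_range F n
    _ = ∏ i ∈ range m, F i := by
        refine (Finset.prod_subset (Finset.range_subset_range.2 hmn) fun x _ hx => ?_).symm
        exact dif_neg (by simpa using hx)
    _ = ∏ j : Fin m, F j.val := (Fin.prod_univ_eq_prod_range F m).symm
    _ = ∏ j : Fin m, (if t j ∧ xorBit hmn Z j then (-1:ℝ) else 1) := by
        refine Finset.prod_congr rfl fun j _ => ?_
        show (if h' : (j.val:ℕ) < m then _ else _) = _
        rw [dif_pos j.isLt]

lemma q_expand {k n m : ℕ} (hmn : m ≤ n) (hm : 1 ≤ m) (Z : Fin k → Fin n → Bool) :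
    qInd hmn Z = ((2:ℝ)^m)⁻¹ * ∑ t : Fin m → Bool,
      (1 + (-1:ℝ)^(univ.filter fun j => t j = true).card) *
        chiP (uc (padRep t)) (uc Z) := by
  simp_rw [chiP_padRep hmn]
  have hS1 : ∑ t : Fin m → Bool, ∏ j, (if t j ∧ xorBit hmn Z j then (-1:ℝ) else 1)
      = if (∀ j, ¬ xorBit hmn Z j) then (2:ℝ)^m else 0 := by
    rw [sum_fun_prod (fun j b => if b ∧ xorBit hmn Z j then (-1:ℝ) else 1)]
    by_cases h : ∀ j, ¬ xorBit hmn Z j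
    · rw [if_pos h]
      rw [show ((2:ℝ)^m = ∏ _j : Fin m, (2:ℝ)) by rw [Finset.prod_const]; simp]
      exact Finset.prod_congr rfl fun j _ => by simp [h j]; norm_num
    · rw [if_neg h]
      push_neg at h
      obtain ⟨j, hj⟩ := h
      apply Finset.prod_eq_zero (Finset.mem_univ j)
      simp [hj]
  have hS2 : ∑ t : Fin m → Bool, (-1:ℝ)^(univ.filter fun j => t j = true).card *
        ∏ j, (if t j ∧ xorBit hmn Z j then (-1:ℝ) else 1)
      = if (∀ j, xorBit hmn Z j) then (2:ℝ)^m else 0 := by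
    have hrw : ∀ t : Fin m → Bool, (-1:ℝ)^(univ.filter fun j => t j = true).card *
          ∏ j, (if t j ∧ xorBit hmn Z j then (-1:ℝ) else 1)
        = ∏ j, ((if t j then (-1:ℝ) else 1) * (if t j ∧ xorBit hmn Z j then (-1:ℝ) else 1)) := by
      intro t
      rw [Finset.prod_mul_distrib, prod_ite_neg (fun j => t j = true)]
    simp_rw [hrw]
    rw [sum_fun_prod (fun j b => (if b then (-1:ℝ) else 1) *
      (if b ∧ xorBit hmn Z j then (-1:ℝ) else 1))]
    by_cases h : ∀ j, xorBit hmn Z j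
    · rw [if_pos h]
      rw [show ((2:ℝ)^m = ∏ _j : Fin m, (2:ℝ)) by rw [Finset.prod_const]; simp]
      exact Finset.prod_congr rfl fun j _ => by simp [h j]; norm_num
    · rw [if_neg h]
      push_neg at h
      obtain ⟨j, hj⟩ := h
      apply Finset.prod_eq_zero (Finset.mem_univ j)
      simp [hj]
  simp_rw [add_mul, one_mul]
  rw [Finset.sum_add_distrib, hS1, hS2]
  unfold qInd
  have h2m : (2:ℝ)^m ≠ 0 := by positivity
  by_cases hA : ∀ j, xorBit hmn Z j
  · have hB : ¬ ∀ j, ¬ xorBit hmn Z j := fun hB => hB ⟨0, hm⟩ (hA ⟨0, hm⟩)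
    rw [if_pos (Or.inl hA), if_pos hA, if_neg hB]
    field_simp
    ring
  · by_cases hB : ∀ j, ¬ xorBit hmn Z j
    · rw [if_pos (Or.inr hB), if_neg hA, if_pos hB]
      field_simp
      ring
    · rw [if_neg (by tauto), if_neg hA, if_neg hB]
      simp

lemma padRep_inj {k n m : ℕ} (hmn : m ≤ n) (hk : 0 < k) {s t : Fin m → Bool}
    (h : padRep (k := k) (n := n) s = padRep t) : s = t := by
  funext j
  have hj : ((Fin.castLE hmn j : Fin n) : ℕ) < m := j.isLt
  have h2 := congrFun (congrFun h ⟨0, hk⟩) (Fin.castLE hmn j)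
  unfold padRep at h2
  rw [dif_pos hj, dif_pos hj] at h2
  exact h2

lemma fourP_qInd {k n m : ℕ} (hmn : m ≤ n) (hm : 1 ≤ m) (S : Fin k → Fin n → Bool) :
    fourP (qInd (k := k) hmn) S = ((2:ℝ)^m)⁻¹ * ∑ t : Fin m → Bool,
      (1 + (-1:ℝ)^(univ.filter fun j => t j = true).card) *
        (if S = padRep t then 1 else 0) := by
  unfold fourP
  have h1 : ∀ z : Fin k → Fin n → Bool,
      (-1:ℝ)^(univ.filter fun p : Fin k × Fin n =>
        S p.1 p.2 = true ∧ z p.1 p.2 = true).card = chiP (uc S) (uc z) := by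
    intro z
    rw [chiP, prod_ite_neg (fun p : Fin k × Fin n => uc S p = true ∧ uc z p = true)]
    rfl
  simp_rw [h1]
  rw [← Equiv.sum_comp (Equiv.curry (Fin k) (Fin n) Bool)
    (fun z => qInd hmn z * chiP (uc S) (uc z))]
  have h2 : ∀ W : Fin k × Fin n → Bool,
      uc ((Equiv.curry (Fin k) (Fin n) Bool) W) = W := by
    intro W; funext p; show W (p.1, p.2) = W p; rw [Prod.mk.eta]
  have h3 : ∀ W : Fin k × Fin n → Bool,
      qInd hmn ((Equiv.curry (Fin k) (Fin n) Bool) W) * chiP (uc S)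
        (uc ((Equiv.curry (Fin k) (Fin n) Bool) W))
      = ((2:ℝ)^m)⁻¹ * ∑ t : Fin m → Bool,
          (1 + (-1:ℝ)^(univ.filter fun j => t j = true).card) *
            (chiP (uc (padRep t)) W * chiP (uc S) W) := by
    intro W
    rw [q_expand hmn hm, h2]
    rw [mul_assoc, Finset.sum_mul]
    congr 1
    refine Finset.sum_congr rfl fun t _ => ?_
    rw [mul_assoc]
  simp_rw [h3]
  rw [← Finset.mul_sum, Finset.sum_comm]
  have hcard : Fintype.card (Fin k × Fin n) = k * n := by simp
  have hstep : ∀ t : Fin m → Bool,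
      ∑ W : Fin k × Fin n → Bool,
        (1 + (-1:ℝ)^(univ.filter fun j => t j = true).card) *
          (chiP (uc (padRep t)) W * chiP (uc S) W)
      = (2:ℝ)^(k*n) * ((1 + (-1:ℝ)^(univ.filter fun j => t j = true).card) *
          (if S = padRep t then 1 else 0)) := by
    intro t
    rw [← Finset.mul_sum, orth (uc (padRep t)) (uc S), hcard]
    by_cases h : S = padRep t
    · rw [if_pos (by rw [h]), if_pos h]
      ring
    · rw [if_neg (fun hc => h (uc_inj hc).symm), if_neg h]
      ring
  simp_rw [hstep]
  rw [← Finset.mul_sum]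
  have h2kn : ((2:ℝ)^(k*n)) ≠ 0 := by positivity
  field_simp
end Aux

/-- Fourier coefficients of the parity-promise indicator `q`:
`q̂(S) = 2^{1−m}` when `S = (s0^{n−m})_e` with `|s|` even, and `q̂(S) = 0` otherwise. -/
theorem stmt5 (k n m : ℕ) (hk : 2 ≤ k) (hm : 1 ≤ m) (hmn : m ≤ n) :
    (∀ s : Fin m → Bool, Even (univ.filter fun j => s j = true).card →
      fourP (qInd (k := k) hmn) (padRep s) = 2 * ((2 : ℝ) ^ m)⁻¹) ∧
    (∀ S : Fin k → Fin n → Bool,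
      (¬ ∃ s : Fin m → Bool, Even (univ.filter fun j => s j = true).card ∧ S = padRep s) →
      fourP (qInd (k := k) hmn) S = 0) := by
  have hk0 : 0 < k := by omega
  constructor
  · intro s hs
    rw [fourP_qInd hmn hm]
    rw [Finset.sum_eq_single s]
    · rw [if_pos rfl, hs.neg_one_pow, mul_one]
      norm_num [mul_comm]
    · intro t _ ht
      rw [if_neg (fun h => ht (padRep_inj hmn hk0 h).symm), mul_zero]
    · intro h
      exact absurd (Finset.mem_univ s) h
  · intro S hS
    rw [fourP_qInd hmn hm]
    rw [Finset.sum_eq_zero, mul_zero]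
    intro t _
    by_cases h : S = padRep t
    · have hodd : ¬ Even (univ.filter fun j => t j = true).card := by
        intro he
        exact hS ⟨t, he, h⟩
      rw [Nat.not_even_iff_odd] at hodd
      rw [hodd.neg_one_pow]
      ring
    · rw [if_neg h, mul_zero]
end

section
/- Fix k ≥ 2 and n ≥ m ≥ 1. Let q : ({0,1}^n)^k → {0,1} be the indicator that ⊕_{e=1}^k z_e^{1:m} ∈ {0^m, 1^m}. Then for any f : ({0,1}^n)^k → {0,1} and any s ∈ {0,1}^n, the Fourier coefficient of the product qf at the repeated string (s,…,s) satisfies: (qf)^(s,…,s) = 2^{1−m} · ∑_{t ∈ {0,1}^m, |t| odd} f̂((t s^{m+1:n}, …, t s^{m+1:n})), where t s^{m+1:n} denotes the n-bit string with first m bits t and remaining bits equal to those of s. -/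
open Finset

lemma neg_one_pow_congr' (a b : ℕ) (h : (a : ZMod 2) = (b : ZMod 2)) : (-1:ℝ)^a = (-1:ℝ)^b := by
  have h2 : a ≡ b [MOD 2] := (ZMod.natCast_eq_natCast_iff a b 2).mp h
  rcases Nat.even_or_odd a with ha | ha
  · have hb : Even b := by rw [Nat.even_iff] at *; unfold Nat.ModEq at h2; omega
    rw [ha.neg_one_pow, hb.neg_one_pow]
  · have hb : Odd b := by rw [Nat.odd_iff] at *; unfold Nat.ModEq at h2; omega
    rw [ha.neg_one_pow, hb.neg_one_pow]

lemma cast_card_filter {α : Type*} [Fintype α] (P : α → Prop) [DecidablePred P] :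
    (((univ.filter P).card : ℕ) : ZMod 2) = ∑ x : α, if P x then (1:ZMod 2) else 0 := by
  rw [Finset.card_filter]; push_cast; simp

lemma pow_card_eq_prod {m : ℕ} (P : Fin m → Prop) [DecidablePred P] :
    (-1:ℝ)^((univ.filter P).card) = ∏ j, if P j then (-1:ℝ) else 1 := by
  rw [← Finset.prod_const, Finset.prod_filter]

lemma sum_bool_prod (m : ℕ) (g : Fin m → Bool → ℝ) :
    ∑ t : Fin m → Bool, ∏ j, g j (t j) = ∏ j, (g j true + g j false) := by
  have h : ∀ j, g j true + g j false = ∑ x : Bool, g j x := fun j => by simp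
  simp_rw [h]
  exact (Fintype.prod_sum g).symm

lemma charSum1 (m : ℕ) (P : Fin m → Prop) [DecidablePred P] :
    ∑ t : Fin m → Bool, (-1:ℝ)^((univ.filter fun j => t j = true ∧ P j).card)
      = if ∀ j, ¬ P j then 2^m else 0 := by
  simp_rw [pow_card_eq_prod]
  rw [sum_bool_prod m (fun j x => if x = true ∧ P j then (-1:ℝ) else 1)]
  by_cases h : ∀ j, ¬ P j
  · rw [if_pos h]
    calc ∏ j : Fin m, ((if true = true ∧ P j then (-1:ℝ) else 1) + if false = true ∧ P j then (-1:ℝ) else 1)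
        = ∏ _j : Fin m, (2:ℝ) := Finset.prod_congr rfl (fun j _ => by simp [h j]; norm_num)
      _ = 2^m := by rw [Finset.prod_const, card_univ, Fintype.card_fin]
  · rw [if_neg h]
    push_neg at h
    obtain ⟨j0, hj0⟩ := h
    exact Finset.prod_eq_zero (mem_univ j0) (by simp [hj0])

lemma charSum2 (m : ℕ) (P : Fin m → Prop) [DecidablePred P] :
    ∑ t : Fin m → Bool, (-1:ℝ)^((univ.filter fun j => t j = true).card) *
        (-1:ℝ)^((univ.filter fun j => t j = true ∧ P j).card)
      = if ∀ j, P j then 2^m else 0 := by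
  simp_rw [pow_card_eq_prod, ← Finset.prod_mul_distrib]
  rw [sum_bool_prod m (fun j x => (if x = true then (-1:ℝ) else 1) * (if x = true ∧ P j then (-1:ℝ) else 1))]
  by_cases h : ∀ j, P j
  · rw [if_pos h]
    refine (Finset.prod_congr rfl (fun j _ => ?_)).trans (by rw [Finset.prod_const, card_univ, Fintype.card_fin] : ∏ _j : Fin m, (2:ℝ) = 2^m)
    simp [h j]; norm_num
  · rw [if_neg h]
    push_neg at h
    obtain ⟨j0, hj0⟩ := h
    exact Finset.prod_eq_zero (mem_univ j0) (by simp [hj0])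

lemma qInd_eq {k n m : ℕ} (hm : 1 ≤ m) (hmn : m ≤ n) (Z : Fin k → Fin n → Bool) :
    qInd hmn Z = 2 * ((2:ℝ)^m)⁻¹ *
      ∑ t : Fin m → Bool, if Even ((univ.filter fun j => t j = true).card)
        then (-1:ℝ)^((univ.filter fun j => t j = true ∧ xorBit hmn Z j).card) else 0 := by
  have hrw : ∀ t : Fin m → Bool,
      (if Even ((univ.filter fun j => t j = true).card)
        then (-1:ℝ)^((univ.filter fun j => t j = true ∧ xorBit hmn Z j).card) else 0)
      = ((-1:ℝ)^((univ.filter fun j => t j = true ∧ xorBit hmn Z j).card)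
          + (-1:ℝ)^((univ.filter fun j => t j = true).card) *
            (-1:ℝ)^((univ.filter fun j => t j = true ∧ xorBit hmn Z j).card)) / 2 := by
    intro t
    by_cases he : Even ((univ.filter fun j => t j = true).card)
    · rw [if_pos he, he.neg_one_pow]; ring
    · rw [if_neg he, (Nat.odd_iff.mpr (Nat.not_even_iff.mp he)).neg_one_pow]; ring
  simp_rw [hrw]
  rw [← Finset.sum_div, Finset.sum_add_distrib, charSum1, charSum2]
  have hpow : (2:ℝ)^m ≠ 0 := by positivity
  unfold qInd
  by_cases h1 : ∀ j : Fin m, xorBit hmn Z j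
  · have h2 : ¬ ∀ j : Fin m, ¬ xorBit hmn Z j := fun h2 => h2 ⟨0, hm⟩ (h1 ⟨0, hm⟩)
    rw [if_pos (Or.inl h1), if_neg h2, if_pos h1]
    field_simp
    ring
  · by_cases h2 : ∀ j : Fin m, ¬ xorBit hmn Z j
    · rw [if_pos (Or.inr h2), if_pos h2, if_neg h1]
      field_simp
      ring
    · rw [if_neg (by tauto), if_neg h2, if_neg h1]
      ring


lemma cast_card_parity {k : ℕ} (c : Finset (Fin k)) {P : Prop} [Decidable P]
    (hP : P ↔ c.card % 2 = 1) : ((c.card : ℕ) : ZMod 2) = if P then 1 else 0 := by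
  by_cases hp : P
  · rw [if_pos hp, ← ZMod.natCast_mod c.card 2, hP.mp hp]; norm_num
  · rw [if_neg hp]
    have h0 : c.card % 2 = 0 := by
      have := hP.not.mp hp; omega
    rw [← ZMod.natCast_mod c.card 2, h0]; norm_num

lemma key {k n m : ℕ} (hmn : m ≤ n) (t : Fin m → Bool) (s : Fin n → Bool)
    (Z : Fin k → Fin n → Bool) :
    (-1:ℝ)^((univ.filter fun j : Fin m => t j = true ∧ xorBit hmn Z j).card) *
    (-1:ℝ)^((univ.filter fun p : Fin k × Fin n => s p.2 = true ∧ Z p.1 p.2 = true).card) =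
    (-1:ℝ)^((univ.filter fun p : Fin k × Fin n =>
        (if h : (p.2:ℕ) < m then xor (s p.2) (t ⟨p.2,h⟩) else s p.2) = true
          ∧ Z p.1 p.2 = true).card) := by
  rw [← pow_add]
  apply neg_one_pow_congr'
  rw [Nat.cast_add, cast_card_filter, cast_card_filter, cast_card_filter]
  have hpt : ∀ p : Fin k × Fin n,
      (if (if h : (p.2:ℕ) < m then xor (s p.2) (t ⟨p.2,h⟩) else s p.2) = true
          ∧ Z p.1 p.2 = true then (1:ZMod 2) else 0)
      = (if s p.2 = true ∧ Z p.1 p.2 = true then 1 else 0)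
        + (if h : (p.2:ℕ) < m then
            (if t ⟨p.2,h⟩ = true ∧ Z p.1 p.2 = true then 1 else 0) else 0) := by
    intro p
    by_cases hp : (p.2:ℕ) < m
    · simp only [dif_pos hp]
      cases hs : s p.2 <;> cases ht : t ⟨p.2,hp⟩ <;> cases hz : Z p.1 p.2 <;>
        simp [hs, ht, hz] <;> decide
    · simp [dif_neg hp]
  simp_rw [hpt, Finset.sum_add_distrib]
  rw [add_comm]
  congr 1
  -- ⊢ ∑ j : Fin m, [t ∧ xorBit] = ∑ p, dite term
  have hsum : ∀ j : Fin n, ∑ e : Fin k,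
      (if h : (j:ℕ) < m then
          (if t ⟨j,h⟩ = true ∧ Z e j = true then (1:ZMod 2) else 0) else 0)
      = (if h : (j:ℕ) < m then
          (if t ⟨j,h⟩ = true ∧ xorBit hmn Z ⟨j,h⟩ then (1:ZMod 2) else 0) else 0) := by
    intro j
    by_cases hj : (j:ℕ) < m
    · simp only [dif_pos hj]
      by_cases ht : t ⟨j,hj⟩ = true
      · simp only [ht, true_and]
        have hcast : Fin.castLE hmn (⟨(j:ℕ), hj⟩ : Fin m) = j := by
          apply Fin.ext; simp
        rw [← cast_card_filter (fun e : Fin k => Z e j = true)]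
        rw [cast_card_parity (univ.filter fun e : Fin k => Z e j = true)
          (P := xorBit hmn Z ⟨j,hj⟩) (by unfold xorBit; rw [hcast])]
      · have ht' : t ⟨(j:ℕ),hj⟩ = false := by simpa using ht
        simp [ht']
    · simp [dif_neg hj]
  simp only [Fintype.sum_prod_type]
  rw [Finset.sum_comm]
  simp_rw [hsum]
  -- now ∑ j : Fin n, dite = ∑ j : Fin m, ...
  let F : ℕ → ZMod 2 := fun i => if h : i < m then
      (if t ⟨i,h⟩ = true ∧ xorBit hmn Z ⟨i,h⟩ then (1:ZMod 2) else 0) else 0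
  have hL : ∑ j : Fin m, (if t j = true ∧ xorBit hmn Z j then (1:ZMod 2) else 0)
      = ∑ i ∈ range m, F i := by
    rw [← Fin.sum_univ_eq_sum_range F m]
    exact Finset.sum_congr rfl (fun j _ => by simp [F, j.isLt])
  have hR : ∑ j : Fin n, (if h : (j:ℕ) < m then
      (if t ⟨j,h⟩ = true ∧ xorBit hmn Z ⟨j,h⟩ then (1:ZMod 2) else 0) else 0)
      = ∑ i ∈ range n, F i := by
    rw [← Fin.sum_univ_eq_sum_range F n]
  rw [hL, hR]
  refine Finset.sum_subset (Finset.range_subset_range.mpr hmn) (fun i _ hi => ?_)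
  have h : ¬ i < m := by simpa using hi
  show F i = 0
  simp only [F]
  rw [dif_neg h]

/-- Fourier coefficients of the product `q·f` at a repeated string `(s,…,s)`:
`(qf)^((s)_e) = 2^{1−m} ∑_{t ∈ {0,1}^m, |t| even} f̂(((s^{1:m}⊕t) s^{m+1:n})_e)`. -/
theorem stmt6 (k n m : ℕ) (hk : 2 ≤ k) (hm : 1 ≤ m) (hmn : m ≤ n)
    (f : (Fin k → Fin n → Bool) → ℝ) (s : Fin n → Bool) :
    fourP (fun Z => qInd hmn Z * f Z) (fun _ => s) =
      2 * ((2 : ℝ) ^ m)⁻¹ *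
        ∑ t : Fin m → Bool,
          if Even (univ.filter fun j => t j = true).card then
            fourP f (fun _ (j : Fin n) =>
              if h : (j : ℕ) < m then xor (s j) (t ⟨j, h⟩) else s j)
          else 0 := by
  simp only [fourP]
  simp_rw [qInd_eq hm hmn]
  have step : ∀ t : Fin m → Bool,
      (∑ Z : Fin k → Fin n → Bool,
        (if Even ((univ.filter fun j => t j = true).card)
          then (-1:ℝ)^((univ.filter fun j => t j = true ∧ xorBit hmn Z j).card) else 0)
          * (f Z * (-1:ℝ)^((univ.filter fun p : Fin k × Fin n =>
              s p.2 = true ∧ Z p.1 p.2 = true).card)))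
      = if Even ((univ.filter fun j => t j = true).card)
          then ∑ Z : Fin k → Fin n → Bool, f Z * (-1:ℝ)^((univ.filter fun p : Fin k × Fin n =>
            (if h : ((p.2:Fin n):ℕ) < m then xor (s p.2) (t ⟨p.2,h⟩) else s p.2) = true
              ∧ Z p.1 p.2 = true).card)
          else 0 := by
    intro t
    by_cases he : Even ((univ.filter fun j => t j = true).card)
    · simp only [if_pos he]
      refine Finset.sum_congr rfl (fun Z _ => ?_)
      rw [← key hmn t s Z]; ring
    · simp only [if_neg he, zero_mul, Finset.sum_const_zero]
  calc ((2:ℝ)^(k*n))⁻¹ * ∑ Z : Fin k → Fin n → Bool,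
        (2 * ((2:ℝ)^m)⁻¹ *
          (∑ t : Fin m → Bool, if Even ((univ.filter fun j => t j = true).card)
            then (-1:ℝ)^((univ.filter fun j => t j = true ∧ xorBit hmn Z j).card) else 0)
          * f Z) * (-1:ℝ)^((univ.filter fun p : Fin k × Fin n =>
              s p.2 = true ∧ Z p.1 p.2 = true).card)
      = 2 * ((2:ℝ)^m)⁻¹ * (((2:ℝ)^(k*n))⁻¹ *
          ∑ Z : Fin k → Fin n → Bool, ∑ t : Fin m → Bool,
            (if Even ((univ.filter fun j => t j = true).card)
              then (-1:ℝ)^((univ.filter fun j => t j = true ∧ xorBit hmn Z j).card) else 0)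
            * (f Z * (-1:ℝ)^((univ.filter fun p : Fin k × Fin n =>
                s p.2 = true ∧ Z p.1 p.2 = true).card))) := by
        have h1 : ∀ Z : Fin k → Fin n → Bool,
            (2 * ((2:ℝ)^m)⁻¹ *
              (∑ t : Fin m → Bool, if Even ((univ.filter fun j => t j = true).card)
                then (-1:ℝ)^((univ.filter fun j => t j = true ∧ xorBit hmn Z j).card) else 0)
              * f Z) * (-1:ℝ)^((univ.filter fun p : Fin k × Fin n =>
                  s p.2 = true ∧ Z p.1 p.2 = true).card)
            = 2 * ((2:ℝ)^m)⁻¹ *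
              ((∑ t : Fin m → Bool, if Even ((univ.filter fun j => t j = true).card)
                then (-1:ℝ)^((univ.filter fun j => t j = true ∧ xorBit hmn Z j).card) else 0)
               * (f Z * (-1:ℝ)^((univ.filter fun p : Fin k × Fin n =>
                  s p.2 = true ∧ Z p.1 p.2 = true).card))) := fun Z => by ring
        simp_rw [h1, Finset.sum_mul, ← Finset.mul_sum]
        ring
    _ = 2 * ((2:ℝ)^m)⁻¹ * (((2:ℝ)^(k*n))⁻¹ *
          ∑ t : Fin m → Bool, if Even ((univ.filter fun j => t j = true).card)
            then ∑ Z : Fin k → Fin n → Bool, f Z * (-1:ℝ)^((univ.filter fun p : Fin k × Fin n =>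
              (if h : ((p.2:Fin n):ℕ) < m then xor (s p.2) (t ⟨p.2,h⟩) else s p.2) = true
                ∧ Z p.1 p.2 = true).card)
            else 0) := by
        rw [Finset.sum_comm]
        rw [Finset.sum_congr rfl (fun t _ => step t)]
    _ = _ := by
        rw [Finset.mul_sum]
        congr 1
        refine Finset.sum_congr rfl (fun t _ => ?_)
        by_cases he : Even ((univ.filter fun j => t j = true).card)
        · rw [if_pos he, if_pos he]
        · rw [if_neg he, if_neg he, mul_zero]
end

section
/- Every finite graph G = (V,E) admits a half-integral optimal fractional vertex cover: there exists x : V → {0, 1/2, 1} with x(u) + x(v) ≥ 1 for every edge uv, such that ∑_v x(v) equals the fractional vertex cover number τ(G) (the minimum of ∑_v f(v) over all f : V → [0,∞) with f(u) + f(v) ≥ 1 for all edges uv). -/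
open Finset

/-- Rounding lemma: any feasible fractional cover with values in `[0,1]` can be
rounded to a half-integral feasible cover of no greater total weight.
Induction on the number of non-half-integral coordinates. -/
private lemma halfint_round {V : Type*} [Fintype V] [DecidableEq V] (G : SimpleGraph V) :
    ∀ (n : ℕ) (g : V → ℝ), (∀ v, 0 ≤ g v) → (∀ v, g v ≤ 1) →
      (∀ u v, G.Adj u v → 1 ≤ g u + g v) →
      {v | ¬ (g v = 0 ∨ g v = 1 / 2 ∨ g v = 1)}.ncard ≤ n →
      ∃ x : V → ℝ, (∀ v, x v = 0 ∨ x v = 1 / 2 ∨ x v = 1) ∧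
        (∀ u v, G.Adj u v → 1 ≤ x u + x v) ∧ ∑ v, x v ≤ ∑ v, g v := by
  intro n
  induction n with
  | zero =>
      intro g h0 h1 hcov hcard
      refine ⟨g, fun v => ?_, hcov, le_rfl⟩
      by_contra h
      have hv : v ∈ {v | ¬ (g v = 0 ∨ g v = 1 / 2 ∨ g v = 1)} := h
      have hempty := (Set.ncard_eq_zero (Set.toFinite _)).mp (Nat.le_zero.mp hcard)
      rw [hempty] at hv
      exact hv
  | succ n ih =>
      intro g h0 h1 hcov hcard
      classical
      by_cases hne : {v | ¬ (g v = 0 ∨ g v = 1 / 2 ∨ g v = 1)}.Nonempty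
      swap
      · refine ⟨g, fun v => ?_, hcov, le_rfl⟩
        by_contra h
        exact hne ⟨v, h⟩
      · set bad : Set V := {v | ¬ (g v = 0 ∨ g v = 1 / 2 ∨ g v = 1)} with hbaddef
        set A : Set V := {v | 1 / 2 < g v ∧ g v < 1} with hAdef
        set C : Set V := {v | 0 < g v ∧ g v < 1 / 2} with hCdef
        have hsub1 : bad ⊆ A ∪ C := by
          intro v hv
          simp only [hbaddef, Set.mem_setOf_eq] at hv
          push_neg at hv
          obtain ⟨e0, eh, e1⟩ := hv
          rcases lt_trichotomy (g v) (1 / 2) with h | h | h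
          · exact Or.inr ⟨lt_of_le_of_ne (h0 v) (Ne.symm e0), h⟩
          · exact absurd h eh
          · exact Or.inl ⟨h, lt_of_le_of_ne (h1 v) e1⟩
        have hsub2 : A ∪ C ⊆ bad := by
          rintro v (⟨hv1, hv2⟩ | ⟨hv1, hv2⟩) <;>
          · simp only [hbaddef, Set.mem_setOf_eq]
            push_neg
            refine ⟨by linarith, by linarith, by linarith⟩
        have hACne : (A ∪ C).Nonempty := hne.mono hsub1
        have hdisj : ∀ z, z ∈ A → z ∈ C → False := by
          intro z ⟨hz1, _⟩ ⟨_, hz2⟩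
          linarith
        have hopp : ∀ z, z ∉ A → z ∉ C → (g z = 0 ∨ g z = 1 / 2 ∨ g z = 1) := by
          intro z hzA hzC
          by_contra h
          rcases hsub1 h with h' | h' <;> [exact hzA h'; exact hzC h']
        set SA : ℝ := ∑ v : V, (if v ∈ A then (1 : ℝ) else 0) with hSAdef
        clear_value SA
        set SC : ℝ := ∑ v : V, (if v ∈ C then (1 : ℝ) else 0) with hSCdef
        clear_value SC
        rcases le_total SC SA with hdir | hdir
        · -- push A down, C up
          set φ : V → ℝ := fun v => if v ∈ A then g v - 1 / 2 else 1 / 2 - g v with hφdef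
          clear_value φ
          obtain ⟨w, hw, hwmin⟩ := Set.exists_min_image (A ∪ C) φ (Set.toFinite _) hACne
          set δ : ℝ := φ w with hδdef
          clear_value δ
          have hδA : ∀ v ∈ A, δ ≤ g v - 1 / 2 := by
            intro v hv
            have := hwmin v (Or.inl hv)
            simpa [hφdef, if_pos hv] using this
          have hδC : ∀ v ∈ C, δ ≤ 1 / 2 - g v := by
            intro v hv
            have hvA : v ∉ A := fun h => hdisj v h hv
            have := hwmin v (Or.inr hv)
            simpa [hφdef, if_neg hvA] using this
          have hδpos : 0 < δ := by
            rcases hw with hwA | hwC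
            · have := hwA
              simp only [hAdef, Set.mem_setOf_eq] at this
              simp only [hδdef, hφdef, if_pos hwA]
              linarith [this.1]
            · have hwA : w ∉ A := fun h => hdisj w h hwC
              have := hwC
              simp only [hCdef, Set.mem_setOf_eq] at this
              simp only [hδdef, hφdef, if_neg hwA]
              linarith [this.2]
          set g' : V → ℝ := fun v => g v + (if v ∈ C then δ else 0) - (if v ∈ A then δ else 0)
            with hg'def
          clear_value g'
          have key : ∀ z,
              (1 / 2 < g z ∧ g z < 1 ∧ g' z = g z - δ ∧ 1 / 2 ≤ g' z ∧ g' z ≤ g z) ∨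
              (0 < g z ∧ g z < 1 / 2 ∧ g' z = g z + δ ∧ g z ≤ g' z ∧ g' z ≤ 1 / 2) ∨
              ((g z = 0 ∨ g z = 1 / 2 ∨ g z = 1) ∧ g' z = g z) := by
            intro z
            by_cases hzA : z ∈ A
            · have hzC : z ∉ C := fun h => hdisj z hzA h
              have hz := hzA
              simp only [hAdef, Set.mem_setOf_eq] at hz
              have heq : g' z = g z - δ := by
                simp [hg'def, if_pos hzA, if_neg hzC]
              exact Or.inl ⟨hz.1, hz.2, heq, by have := hδA z hzA; linarith,
                by linarith [hδpos]⟩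
            · by_cases hzC : z ∈ C
              · have hz := hzC
                simp only [hCdef, Set.mem_setOf_eq] at hz
                have heq : g' z = g z + δ := by
                  simp [hg'def, if_pos hzC, if_neg hzA]
                exact Or.inr (Or.inl ⟨hz.1, hz.2, heq, by linarith [hδpos],
                  by have := hδC z hzC; linarith⟩)
              · have heq : g' z = g z := by
                  simp [hg'def, if_neg hzA, if_neg hzC]
                exact Or.inr (Or.inr ⟨hopp z hzA hzC, heq⟩)
          have h0' : ∀ v, 0 ≤ g' v := by
            intro v
            rcases key v with ⟨_, _, _, h, _⟩ | ⟨h1', _, _, h, _⟩ | ⟨_, h⟩ <;>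
              [linarith; linarith; (rw [h]; exact h0 v)]
          have h1' : ∀ v, g' v ≤ 1 := by
            intro v
            rcases key v with ⟨_, hlt, _, _, h⟩ | ⟨_, _, _, _, h⟩ | ⟨_, h⟩ <;>
              [linarith; linarith; (rw [h]; exact h1 v)]
          have hcov' : ∀ u v, G.Adj u v → 1 ≤ g' u + g' v := by
            intro u v huv
            have hsum := hcov u v huv
            rcases key u with ⟨hu1, hu2, hu3, hu4, hu5⟩ | ⟨hu1, hu2, hu3, hu4, hu5⟩ | ⟨hu, hu3⟩ <;>
              rcases key v with ⟨hv1, hv2, hv3, hv4, hv5⟩ | ⟨hv1, hv2, hv3, hv4, hv5⟩ | ⟨hv, hv3⟩ <;>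
              first
                | linarith
                | (rcases hu with h | h | h <;> rcases hv with h' | h' | h' <;> linarith)
                | (rcases hu with h | h | h <;> linarith)
                | (rcases hv with h | h | h <;> linarith)
          have hwbad : w ∈ bad := hsub2 hw
          have hwhalf : g' w = 1 / 2 := by
            rcases hw with hwA | hwC
            · have hwC : w ∉ C := fun h => hdisj w hwA h
              simp only [hg'def, hδdef, hφdef, if_pos hwA, if_neg hwC]
              ring
            · have hwA : w ∉ A := fun h => hdisj w h hwC
              simp only [hg'def, hδdef, hφdef, if_pos hwC, if_neg hwA]
              ring
          have hcard' : {v | ¬ (g' v = 0 ∨ g' v = 1 / 2 ∨ g' v = 1)}.ncard ≤ n := by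
            have hsubnew : {v | ¬ (g' v = 0 ∨ g' v = 1 / 2 ∨ g' v = 1)} ⊆ bad \ {w} := by
              intro v hv
              simp only [Set.mem_setOf_eq] at hv
              have hvbad : v ∈ bad := by
                by_contra hvb
                have hval : g v = 0 ∨ g v = 1 / 2 ∨ g v = 1 := by
                  by_contra h; exact hvb h
                rcases key v with ⟨h1', h2', _⟩ | ⟨h1', h2', _⟩ | ⟨_, he⟩
                · rcases hval with h | h | h <;> linarith
                · rcases hval with h | h | h <;> linarith
                · rw [he] at hv; exact hv hval
              refine ⟨hvbad, ?_⟩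
              simp only [Set.mem_singleton_iff]
              intro hvw
              rw [hvw] at hv
              exact hv (Or.inr (Or.inl hwhalf))
            have hlt : {v | ¬ (g' v = 0 ∨ g' v = 1 / 2 ∨ g' v = 1)}.ncard < bad.ncard :=
              lt_of_le_of_lt (Set.ncard_le_ncard hsubnew (Set.toFinite _))
                (Set.ncard_diff_singleton_lt_of_mem hwbad (Set.toFinite _))
            omega
          obtain ⟨x, hx1, hx2, hx3⟩ := ih g' h0' h1' hcov' (by omega)
          refine ⟨x, hx1, hx2, le_trans hx3 ?_⟩
          have hsum' : ∑ v, g' v = ∑ v, g v + δ * SC - δ * SA := by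
            simp only [hg'def]
            rw [Finset.sum_sub_distrib, Finset.sum_add_distrib]
            congr 1
            · congr 1
              rw [hSCdef, Finset.mul_sum]
              refine Finset.sum_congr rfl fun v _ => ?_
              split_ifs <;> ring
            · rw [hSAdef, Finset.mul_sum]
              refine Finset.sum_congr rfl fun v _ => ?_
              split_ifs <;> ring
          have : δ * SC ≤ δ * SA := mul_le_mul_of_nonneg_left hdir hδpos.le
          linarith [hsum'.le, hsum'.ge]
        · -- push A up, C down
          set φ : V → ℝ := fun v => if v ∈ A then 1 - g v else g v with hφdef
          clear_value φ
          obtain ⟨w, hw, hwmin⟩ := Set.exists_min_image (A ∪ C) φ (Set.toFinite _) hACne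
          set δ : ℝ := φ w with hδdef
          clear_value δ
          have hδA : ∀ v ∈ A, δ ≤ 1 - g v := by
            intro v hv
            have := hwmin v (Or.inl hv)
            simpa [hφdef, if_pos hv] using this
          have hδC : ∀ v ∈ C, δ ≤ g v := by
            intro v hv
            have hvA : v ∉ A := fun h => hdisj v h hv
            have := hwmin v (Or.inr hv)
            simpa [hφdef, if_neg hvA] using this
          have hδpos : 0 < δ := by
            rcases hw with hwA | hwC
            · have := hwA
              simp only [hAdef, Set.mem_setOf_eq] at this
              simp only [hδdef, hφdef, if_pos hwA]
              linarith [this.2]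
            · have hwA : w ∉ A := fun h => hdisj w h hwC
              have := hwC
              simp only [hCdef, Set.mem_setOf_eq] at this
              simp only [hδdef, hφdef, if_neg hwA]
              linarith [this.1]
          set g' : V → ℝ := fun v => g v + (if v ∈ A then δ else 0) - (if v ∈ C then δ else 0)
            with hg'def
          clear_value g'
          have key : ∀ z,
              (1 / 2 < g z ∧ g z < 1 ∧ g' z = g z + δ ∧ g z ≤ g' z ∧ g' z ≤ 1) ∨
              (0 < g z ∧ g z < 1 / 2 ∧ g' z = g z - δ ∧ 0 ≤ g' z ∧ g' z ≤ g z) ∨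
              ((g z = 0 ∨ g z = 1 / 2 ∨ g z = 1) ∧ g' z = g z) := by
            intro z
            by_cases hzA : z ∈ A
            · have hzC : z ∉ C := fun h => hdisj z hzA h
              have hz := hzA
              simp only [hAdef, Set.mem_setOf_eq] at hz
              have heq : g' z = g z + δ := by
                simp [hg'def, if_pos hzA, if_neg hzC]
              exact Or.inl ⟨hz.1, hz.2, heq, by linarith [hδpos],
                by have := hδA z hzA; linarith⟩
            · by_cases hzC : z ∈ C
              · have hz := hzC
                simp only [hCdef, Set.mem_setOf_eq] at hz
                have heq : g' z = g z - δ := by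
                  simp [hg'def, if_pos hzC, if_neg hzA]
                exact Or.inr (Or.inl ⟨hz.1, hz.2, heq, by have := hδC z hzC; linarith,
                  by linarith [hδpos]⟩)
              · have heq : g' z = g z := by
                  simp [hg'def, if_neg hzA, if_neg hzC]
                exact Or.inr (Or.inr ⟨hopp z hzA hzC, heq⟩)
          have h0' : ∀ v, 0 ≤ g' v := by
            intro v
            rcases key v with ⟨h1', _, _, h, _⟩ | ⟨_, _, _, h, _⟩ | ⟨_, h⟩ <;>
              [linarith; linarith; (rw [h]; exact h0 v)]
          have h1' : ∀ v, g' v ≤ 1 := by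
            intro v
            rcases key v with ⟨_, _, _, _, h⟩ | ⟨_, hlt, _, _, h⟩ | ⟨_, h⟩ <;>
              [linarith; linarith; (rw [h]; exact h1 v)]
          have hcov' : ∀ u v, G.Adj u v → 1 ≤ g' u + g' v := by
            intro u v huv
            have hsum := hcov u v huv
            rcases key u with ⟨hu1, hu2, hu3, hu4, hu5⟩ | ⟨hu1, hu2, hu3, hu4, hu5⟩ | ⟨hu, hu3⟩ <;>
              rcases key v with ⟨hv1, hv2, hv3, hv4, hv5⟩ | ⟨hv1, hv2, hv3, hv4, hv5⟩ | ⟨hv, hv3⟩ <;>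
              first
                | linarith
                | (rcases hu with h | h | h <;> rcases hv with h' | h' | h' <;> linarith)
                | (rcases hu with h | h | h <;> linarith)
                | (rcases hv with h | h | h <;> linarith)
          have hwbad : w ∈ bad := hsub2 hw
          have hwhalf : g' w = 0 ∨ g' w = 1 := by
            rcases hw with hwA | hwC
            · have hwC : w ∉ C := fun h => hdisj w hwA h
              refine Or.inr ?_
              simp only [hg'def, hδdef, hφdef, if_pos hwA, if_neg hwC]
              ring
            · have hwA : w ∉ A := fun h => hdisj w h hwC
              refine Or.inl ?_
              simp only [hg'def, hδdef, hφdef, if_pos hwC, if_neg hwA]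
              ring
          have hcard' : {v | ¬ (g' v = 0 ∨ g' v = 1 / 2 ∨ g' v = 1)}.ncard ≤ n := by
            have hsubnew : {v | ¬ (g' v = 0 ∨ g' v = 1 / 2 ∨ g' v = 1)} ⊆ bad \ {w} := by
              intro v hv
              simp only [Set.mem_setOf_eq] at hv
              have hvbad : v ∈ bad := by
                by_contra hvb
                have hval : g v = 0 ∨ g v = 1 / 2 ∨ g v = 1 := by
                  by_contra h; exact hvb h
                rcases key v with ⟨h1', h2', _⟩ | ⟨h1', h2', _⟩ | ⟨_, he⟩
                · rcases hval with h | h | h <;> linarith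
                · rcases hval with h | h | h <;> linarith
                · rw [he] at hv; exact hv hval
              refine ⟨hvbad, ?_⟩
              simp only [Set.mem_singleton_iff]
              intro hvw
              rw [hvw] at hv
              rcases hwhalf with h | h
              · exact hv (Or.inl h)
              · exact hv (Or.inr (Or.inr h))
            have hlt : {v | ¬ (g' v = 0 ∨ g' v = 1 / 2 ∨ g' v = 1)}.ncard < bad.ncard :=
              lt_of_le_of_lt (Set.ncard_le_ncard hsubnew (Set.toFinite _))
                (Set.ncard_diff_singleton_lt_of_mem hwbad (Set.toFinite _))
            omega
          obtain ⟨x, hx1, hx2, hx3⟩ := ih g' h0' h1' hcov' (by omega)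
          refine ⟨x, hx1, hx2, le_trans hx3 ?_⟩
          have hsum' : ∑ v, g' v = ∑ v, g v + δ * SA - δ * SC := by
            simp only [hg'def]
            rw [Finset.sum_sub_distrib, Finset.sum_add_distrib]
            congr 1
            · congr 1
              rw [hSAdef, Finset.mul_sum]
              refine Finset.sum_congr rfl fun v _ => ?_
              split_ifs <;> ring
            · rw [hSCdef, Finset.mul_sum]
              refine Finset.sum_congr rfl fun v _ => ?_
              split_ifs <;> ring
          have : δ * SA ≤ δ * SC := mul_le_mul_of_nonneg_left hdir hδpos.le
          linarith [hsum'.le, hsum'.ge]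

private lemma halfint_of_feasible {V : Type*} [Fintype V] [DecidableEq V] (G : SimpleGraph V)
    (f : V → ℝ) (h0 : ∀ v, 0 ≤ f v) (hcov : ∀ u v, G.Adj u v → 1 ≤ f u + f v) :
    ∃ x : V → ℝ, (∀ v, x v = 0 ∨ x v = 1 / 2 ∨ x v = 1) ∧
      (∀ u v, G.Adj u v → 1 ≤ x u + x v) ∧ ∑ v, x v ≤ ∑ v, f v := by
  set g : V → ℝ := fun v => min (f v) 1 with hgdef
  have h0g : ∀ v, 0 ≤ g v := fun v => le_min (h0 v) zero_le_one
  have h1g : ∀ v, g v ≤ 1 := fun v => min_le_right _ _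
  have hcovg : ∀ u v, G.Adj u v → 1 ≤ g u + g v := by
    intro u v huv
    rcases le_or_gt 1 (f u) with hu | hu
    · have : g u = 1 := min_eq_right hu
      rw [this]
      linarith [h0g v]
    · rcases le_or_gt 1 (f v) with hv | hv
      · have : g v = 1 := min_eq_right hv
        rw [this]
        linarith [h0g u]
      · have hgu : g u = f u := min_eq_left hu.le
        have hgv : g v = f v := min_eq_left hv.le
        rw [hgu, hgv]
        exact hcov u v huv
  obtain ⟨x, hx1, hx2, hx3⟩ := halfint_round G (Nat.card V) g h0g h1g hcovg
    (le_trans (Set.ncard_le_ncard (Set.subset_univ _) Set.finite_univ)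
      (le_of_eq (Set.ncard_univ V)))
  exact ⟨x, hx1, hx2, le_trans hx3 (Finset.sum_le_sum fun v _ => min_le_left _ _)⟩

/-- Every finite graph admits a half-integral optimal fractional vertex cover:
some `x : V → {0, 1/2, 1}` covering every edge, whose total weight equals the
fractional vertex cover number (the infimum of the vertex cover LP). -/
theorem stmt12 (V : Type*) [Fintype V] [DecidableEq V] (G : SimpleGraph V) :
    ∃ x : V → ℝ,
      (∀ v, x v = 0 ∨ x v = 1 / 2 ∨ x v = 1) ∧
      (∀ u v, G.Adj u v → 1 ≤ x u + x v) ∧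
      ∑ v, x v =
        sInf {r : ℝ | ∃ f : V → ℝ, (∀ v, 0 ≤ f v) ∧
          (∀ u v, G.Adj u v → 1 ≤ f u + f v) ∧ r = ∑ v, f v} := by
  classical
  set S : Set ℝ := {r : ℝ | ∃ f : V → ℝ, (∀ v, 0 ≤ f v) ∧
    (∀ u v, G.Adj u v → 1 ≤ f u + f v) ∧ r = ∑ v, f v} with hSdef
  have hSne : S.Nonempty :=
    ⟨∑ _v : V, (1 : ℝ), fun _ => 1, fun _ => zero_le_one, fun u v _ => by norm_num, rfl⟩
  have hSbdd : BddBelow S := by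
    refine ⟨0, ?_⟩
    rintro r ⟨f, h0, -, rfl⟩
    exact Finset.sum_nonneg fun v _ => h0 v
  set H : Set (V → ℝ) := {x | (∀ v, x v = 0 ∨ x v = 1 / 2 ∨ x v = 1) ∧
    ∀ u v, G.Adj u v → 1 ≤ x u + x v} with hHdef
  have hHfin : H.Finite := by
    have : H ⊆ Set.pi Set.univ fun _ : V => ({0, 1 / 2, 1} : Set ℝ) := by
      intro x hx v _
      rcases hx.1 v with h | h | h <;> simp [h]
    exact Set.Finite.subset (Set.Finite.pi fun _ => by
      exact (Set.finite_singleton (1 : ℝ)).insert (1 / 2) |>.insert 0) this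
  have hHne : H.Nonempty :=
    ⟨fun _ => 1, fun _ => Or.inr (Or.inr rfl), fun u v _ => by norm_num⟩
  obtain ⟨x, hxH, hxmin⟩ := Set.exists_min_image H (fun x => ∑ v, x v) hHfin hHne
  refine ⟨x, hxH.1, hxH.2, le_antisymm ?_ ?_⟩
  · refine le_csInf hSne ?_
    rintro r ⟨f, h0, hcov, rfl⟩
    obtain ⟨y, hy1, hy2, hy3⟩ := halfint_of_feasible G f h0 hcov
    exact le_trans (hxmin y ⟨hy1, hy2⟩) hy3
  · refine csInf_le hSbdd ?_
    refine ⟨x, fun v => ?_, hxH.2, rfl⟩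
    rcases hxH.1 v with h | h | h <;> rw [h] <;> norm_num
end

section
/- Let G = (V,E) be a connected graph with |E| > 1. Then max(MVC_{1/2}(G), max_{e∈E} MVC_1(G∖e)) = MVC_1(G), where MVC_1(G) is the standard fractional vertex cover number of G and G∖e denotes G with edge e deleted (vertices retained). In particular, either G is an odd cycle (in which case MVC_{1/2}(G) = MVC_1(G) = |E|/2), or there exists an edge e with MVC_1(G∖e) = MVC_1(G). -/
set_option linter.unusedSectionVars false

open Finset

/-- The λ-modified fractional vertex cover number of a graph given by its edge set
`Ed ⊆ Sym2 V`: mass may be placed on vertices, and on edges at price `λ`. -/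
noncomputable def MVC (V : Type*) [Fintype V] [DecidableEq V] (lam : ℝ)
    (Ed : Finset (Sym2 V)) : ℝ :=
  sInf {r : ℝ | ∃ fV : V → ℝ, ∃ fE : Sym2 V → ℝ,
    (∀ v, 0 ≤ fV v) ∧ (∀ e, 0 ≤ fE e) ∧
    (∀ u v, s(u, v) ∈ Ed → 1 ≤ fV u + fV v + fE s(u, v)) ∧
    r = ∑ v, fV v + lam * ∑ e ∈ Ed, fE e}

namespace MVCAux

def MVCset (V : Type*) [Fintype V] [DecidableEq V] (lam : ℝ)
    (Ed : Finset (Sym2 V)) : Set ℝ :=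
  {r : ℝ | ∃ fV : V → ℝ, ∃ fE : Sym2 V → ℝ,
    (∀ v, 0 ≤ fV v) ∧ (∀ e, 0 ≤ fE e) ∧
    (∀ u v, s(u, v) ∈ Ed → 1 ≤ fV u + fV v + fE s(u, v)) ∧
    r = ∑ v, fV v + lam * ∑ e ∈ Ed, fE e}

variable {V : Type*} [Fintype V] [DecidableEq V]

lemma MVC_eq (lam : ℝ) (Ed : Finset (Sym2 V)) : MVC V lam Ed = sInf (MVCset V lam Ed) := rfl

lemma MVCset_nonneg {lam : ℝ} (hlam : 0 ≤ lam) (Ed : Finset (Sym2 V)) :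
    ∀ r ∈ MVCset V lam Ed, (0:ℝ) ≤ r := by
  rintro r ⟨fV, fE, h0, h1, _, rfl⟩
  have hV : (0:ℝ) ≤ ∑ v, fV v := Finset.sum_nonneg fun v _ => h0 v
  have hE : (0:ℝ) ≤ ∑ e ∈ Ed, fE e := Finset.sum_nonneg fun e _ => h1 e
  have := mul_nonneg hlam hE
  linarith

lemma MVCset_bddBelow {lam : ℝ} (hlam : 0 ≤ lam) (Ed : Finset (Sym2 V)) :
    BddBelow (MVCset V lam Ed) := ⟨0, fun r hr => MVCset_nonneg hlam Ed r hr⟩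

lemma MVCset_nonempty (lam : ℝ) (Ed : Finset (Sym2 V)) : (MVCset V lam Ed).Nonempty := by
  refine ⟨_, (fun _ => 1), (fun _ => 0), fun v => zero_le_one, fun e => le_rfl, ?_, rfl⟩
  intro u v _; norm_num

lemma le_MVC {lam a : ℝ} {Ed : Finset (Sym2 V)}
    (h : ∀ fV : V → ℝ, ∀ fE : Sym2 V → ℝ, (∀ v, 0 ≤ fV v) → (∀ e, 0 ≤ fE e) →
      (∀ u v, s(u, v) ∈ Ed → 1 ≤ fV u + fV v + fE s(u, v)) →
      a ≤ ∑ v, fV v + lam * ∑ e ∈ Ed, fE e) :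
    a ≤ MVC V lam Ed := by
  rw [MVC_eq]
  refine le_csInf (MVCset_nonempty lam Ed) ?_
  rintro r ⟨fV, fE, h0, h1, hc, rfl⟩
  exact h fV fE h0 h1 hc

lemma MVC_nonneg {lam : ℝ} (hlam : 0 ≤ lam) (Ed : Finset (Sym2 V)) : 0 ≤ MVC V lam Ed := by
  rw [MVC_eq]; exact le_csInf (MVCset_nonempty lam Ed) (MVCset_nonneg hlam Ed)

lemma MVC_le_cover {lam : ℝ} (hlam : 0 ≤ lam) (Ed : Finset (Sym2 V)) (f : V → ℝ)
    (hf0 : ∀ v, 0 ≤ f v) (hcov : ∀ u v, s(u, v) ∈ Ed → 1 ≤ f u + f v) :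
    MVC V lam Ed ≤ ∑ v, f v := by
  rw [MVC_eq]
  have hmem : (∑ v, f v) ∈ MVCset V lam Ed := by
    refine ⟨f, fun _ => 0, hf0, fun e => le_rfl, ?_, by simp⟩
    intro u v h; simpa using hcov u v h
  exact csInf_le (MVCset_bddBelow hlam Ed) hmem

lemma MVC_mono {lam : ℝ} (hlam : 0 ≤ lam) {Ed' Ed : Finset (Sym2 V)} (hsub : Ed' ⊆ Ed) :
    MVC V lam Ed' ≤ MVC V lam Ed := by
  rw [MVC_eq lam Ed]
  refine le_csInf (MVCset_nonempty lam Ed) ?_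
  rintro r ⟨fV, fE, h0, h1, hc, rfl⟩
  have hmem : (∑ v, fV v + lam * ∑ e ∈ Ed', fE e) ∈ MVCset V lam Ed' :=
    ⟨fV, fE, h0, h1, fun u v h => hc u v (hsub h), rfl⟩
  refine le_trans (csInf_le (MVCset_bddBelow hlam Ed') hmem) ?_
  have : ∑ e ∈ Ed', fE e ≤ ∑ e ∈ Ed, fE e :=
    Finset.sum_le_sum_of_subset_of_nonneg hsub (fun e _ _ => h1 e)
  nlinarith

lemma MVC_half_le (Ed : Finset (Sym2 V)) : MVC V (1/2) Ed ≤ MVC V 1 Ed := by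
  rw [MVC_eq 1 Ed]
  refine le_csInf (MVCset_nonempty 1 Ed) ?_
  rintro r ⟨fV, fE, h0, h1, hc, rfl⟩
  have hmem : (∑ v, fV v + (1/2 : ℝ) * ∑ e ∈ Ed, fE e) ∈ MVCset V (1/2) Ed :=
    ⟨fV, fE, h0, h1, hc, rfl⟩
  rw [MVC_eq]
  refine le_trans (csInf_le (MVCset_bddBelow (by norm_num) Ed) hmem) ?_
  have hE : (0:ℝ) ≤ ∑ e ∈ Ed, fE e := Finset.sum_nonneg fun e _ => h1 e
  nlinarith


/-- symmetric vertex-sum over an edge -/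
def vsum (f : V → ℝ) : Sym2 V → ℝ := Sym2.lift ⟨fun u v => f u + f v, fun u v => by ring⟩

@[simp] lemma vsum_mk (f : V → ℝ) (u v : V) : vsum f s(u, v) = f u + f v := rfl

/-- weighted degree of `v`: total `y`-mass of edges of `Ed` at `v`. -/
def sdeg (Ed : Finset (Sym2 V)) (y : Sym2 V → ℝ) (v : V) : ℝ :=
  ∑ e ∈ Ed, if v ∈ e then y e else 0

lemma sdeg_nonneg {Ed : Finset (Sym2 V)} {y : Sym2 V → ℝ} (hy : ∀ e ∈ Ed, 0 ≤ y e) (v : V) :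
    0 ≤ sdeg Ed y v := by
  refine Finset.sum_nonneg fun e he => ?_
  split <;> simp [hy e he]

lemma sdeg_mono {Ed' Ed : Finset (Sym2 V)} (hsub : Ed' ⊆ Ed) {y : Sym2 V → ℝ}
    (hy : ∀ e ∈ Ed, 0 ≤ y e) (v : V) : sdeg Ed' y v ≤ sdeg Ed y v := by
  refine Finset.sum_le_sum_of_subset_of_nonneg hsub fun e he _ => ?_
  split <;> simp [hy e he]

lemma le_sdeg {Ed : Finset (Sym2 V)} {y : Sym2 V → ℝ} (hy : ∀ e ∈ Ed, 0 ≤ y e)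
    {e : Sym2 V} (he : e ∈ Ed) {v : V} (hv : v ∈ e) : y e ≤ sdeg Ed y v := by
  have := Finset.single_le_sum (f := fun e => if v ∈ e then y e else 0)
    (fun x hx => by show 0 ≤ (if v ∈ x then y x else 0); split <;> simp [hy x hx]) he
  simpa [hv, sdeg] using this

lemma sum_mul_vsum (Ed : Finset (Sym2 V)) (hloop : ∀ e ∈ Ed, ¬ e.IsDiag)
    (y : Sym2 V → ℝ) (f : V → ℝ) :
    ∑ e ∈ Ed, y e * vsum f e = ∑ v, f v * sdeg Ed y v := by
  have : ∀ v, f v * sdeg Ed y v = ∑ e ∈ Ed, if v ∈ e then f v * y e else 0 := by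
    intro v
    rw [sdeg, Finset.mul_sum]
    exact Finset.sum_congr rfl fun e he => by split <;> ring
  simp_rw [this]
  rw [Finset.sum_comm]
  refine Finset.sum_congr rfl fun e he => ?_
  have hd := hloop e he
  induction e using Sym2.inductionOn with
  | hf u w =>
    have huw : u ≠ w := by simpa [Sym2.mk_isDiag_iff] using hd
    rw [← Finset.sum_filter]
    have hf : Finset.filter (fun v => v ∈ s(u, w)) Finset.univ = {u, w} := by
      ext z; simp [Sym2.mem_iff]
    rw [hf, Finset.sum_pair huw, vsum_mk]
    ring

lemma cover_of_feasible {Ed : Finset (Sym2 V)} {fV : V → ℝ} {fE : Sym2 V → ℝ}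
    (hc : ∀ u v, s(u, v) ∈ Ed → 1 ≤ fV u + fV v + fE s(u, v)) :
    ∀ e ∈ Ed, 1 ≤ vsum fV e + fE e := by
  intro e he
  induction e using Sym2.inductionOn with
  | hf u w => simpa using hc u w he

lemma weak_duality (Ed : Finset (Sym2 V)) (hloop : ∀ e ∈ Ed, ¬ e.IsDiag)
    (y : Sym2 V → ℝ) (hy0 : ∀ e ∈ Ed, 0 ≤ y e) (hσ : ∀ v, sdeg Ed y v ≤ 1) :
    ∑ e ∈ Ed, y e ≤ MVC V 1 Ed := by
  refine le_MVC fun fV fE h0V h0E hcov => ?_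
  have hcov' := cover_of_feasible hcov
  have hy1 : ∀ e ∈ Ed, y e ≤ 1 := by
    intro e he
    exact le_trans (le_sdeg hy0 he (Sym2.out_fst_mem e)) (hσ _)
  calc ∑ e ∈ Ed, y e ≤ ∑ e ∈ Ed, y e * (vsum fV e + fE e) := by
        refine Finset.sum_le_sum fun e he => ?_
        have := hy0 e he
        nlinarith [hcov' e he]
    _ = ∑ e ∈ Ed, y e * vsum fV e + ∑ e ∈ Ed, y e * fE e := by
        rw [← Finset.sum_add_distrib]
        exact Finset.sum_congr rfl fun e _ => by ring
    _ ≤ ∑ v, fV v + 1 * ∑ e ∈ Ed, fE e := by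
        refine add_le_add ?_ ?_
        · rw [sum_mul_vsum Ed hloop]
          refine Finset.sum_le_sum fun v _ => ?_
          calc fV v * sdeg Ed y v ≤ fV v * 1 := by
                have := h0V v; nlinarith [hσ v]
            _ = fV v := by ring
        · rw [one_mul]
          refine Finset.sum_le_sum fun e he => ?_
          have := h0E e
          nlinarith [hy1 e he]

lemma sdeg_sub (Ed : Finset (Sym2 V)) (y z : Sym2 V → ℝ) (t : ℝ) (v : V) :
    sdeg Ed (fun e => y e - t * z e) v = sdeg Ed y v - t * sdeg Ed z v := by
  simp only [sdeg, mul_sum, ← Finset.sum_sub_distrib]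
  exact Finset.sum_congr rfl fun e _ => by split <;> ring

lemma sum_eq_half_sum_sdeg (Ed : Finset (Sym2 V)) (hloop : ∀ e ∈ Ed, ¬ e.IsDiag)
    (y : Sym2 V → ℝ) : 2 * ∑ e ∈ Ed, y e = ∑ v, sdeg Ed y v := by
  have := sum_mul_vsum Ed hloop y (fun _ => 1)
  simp only [one_mul] at this
  rw [← this]
  rw [Finset.mul_sum]
  refine Finset.sum_congr rfl fun e he => ?_
  induction e using Sym2.inductionOn with
  | hf u w => simp [vsum_mk]; ring

/-- at most one element of `s` satisfies `P` ⇒ indicator sum bounded by `c`. -/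
lemma sum_indicator_le {α : Type*} [DecidableEq α] (s : Finset α) (P : α → Prop)
    [DecidablePred P] {c : ℝ} (hc : 0 ≤ c)
    (h : ∀ a ∈ s, P a → ∀ b ∈ s, P b → a = b) :
    ∑ a ∈ s, (if P a then c else 0) ≤ c := by
  rw [← Finset.sum_filter]
  rw [Finset.sum_const]
  have hcard : (s.filter P).card ≤ 1 := by
    refine Finset.card_le_one.2 fun a ha b hb => ?_
    simp only [Finset.mem_filter] at ha hb
    exact h a ha.1 ha.2 b hb.1 hb.2
  rw [nsmul_eq_mul]
  have h1 : ((s.filter (fun a => P a)).card : ℝ) ≤ 1 := by exact_mod_cast hcard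
  nlinarith


lemma hall_side (R : Finset (V × V)) (CL CR : Finset V)
    (hcov : ∀ p ∈ R, p.1 ∈ CL ∨ p.2 ∈ CR)
    (hmin : ∀ CL' CR' : Finset V, (∀ p ∈ R, p.1 ∈ CL' ∨ p.2 ∈ CR') →
      CL.card + CR.card ≤ CL'.card + CR'.card) :
    ∃ F : {x // x ∈ CL} → V, Function.Injective F ∧
      ∀ x, F x ∈ ((R.filter (fun p => p.1 = ↑x)).image Prod.snd) \ CR := by
  classical
  set t : {x // x ∈ CL} → Finset V :=
    fun x => ((R.filter (fun p => p.1 = ↑x)).image Prod.snd) \ CR with ht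
  refine (Finset.all_card_le_biUnion_card_iff_exists_injective t).1 ?_
  intro A
  by_contra hA
  push_neg at hA
  set CL' := CL \ (A.image Subtype.val) with hCL'def
  set CR' := CR ∪ A.biUnion t with hCR'def
  have hcov' : ∀ p ∈ R, p.1 ∈ CL' ∨ p.2 ∈ CR' := by
    intro p hp
    by_cases h1 : p.1 ∈ CL
    · by_cases h2 : (⟨p.1, h1⟩ : {x // x ∈ CL}) ∈ A
      · right
        by_cases h3 : p.2 ∈ CR
        · exact Finset.mem_union_left _ h3
        · refine Finset.mem_union_right _ (Finset.mem_biUnion.2 ⟨_, h2, ?_⟩)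
          refine Finset.mem_sdiff.2 ⟨?_, h3⟩
          exact Finset.mem_image.2 ⟨p, Finset.mem_filter.2 ⟨hp, rfl⟩, rfl⟩
      · left
        refine Finset.mem_sdiff.2 ⟨h1, fun hmem => ?_⟩
        obtain ⟨x, hx, hval⟩ := Finset.mem_image.1 hmem
        exact h2 (by rwa [show x = ⟨p.1, h1⟩ from Subtype.ext hval] at hx)
    · rcases hcov p hp with h | h
      · exact absurd h h1
      · exact Or.inr (Finset.mem_union_left _ h)
  have hcards := hmin CL' CR' hcov'
  have hA_sub : A.image Subtype.val ⊆ CL := by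
    intro a ha; obtain ⟨x, _, rfl⟩ := Finset.mem_image.1 ha; exact x.2
  have hCL' : CL'.card = CL.card - A.card := by
    rw [hCL'def, Finset.card_sdiff_of_subset hA_sub, Finset.card_image_of_injective _ Subtype.val_injective]
  have hAle : A.card ≤ CL.card := by
    rw [← Finset.card_image_of_injective A Subtype.val_injective]
    exact Finset.card_le_card hA_sub
  have hCR' : CR'.card ≤ CR.card + (A.biUnion t).card := Finset.card_union_le _ _
  omega

lemma konig (R : Finset (V × V)) :
    ∃ (M : Finset (V × V)) (CL CR : Finset V), M ⊆ R ∧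
      (∀ p ∈ M, ∀ q ∈ M, p ≠ q → p.1 ≠ q.1 ∧ p.2 ≠ q.2) ∧
      (∀ p ∈ R, p.1 ∈ CL ∨ p.2 ∈ CR) ∧ CL.card + CR.card = M.card := by
  classical
  obtain ⟨c, hc_mem, hc_min⟩ := Finset.exists_min_image
    ((Finset.univ.powerset ×ˢ Finset.univ.powerset).filter
      (fun c : Finset V × Finset V => ∀ p ∈ R, p.1 ∈ c.1 ∨ p.2 ∈ c.2))
    (fun c => c.1.card + c.2.card) ⟨(Finset.univ, ∅), by simp⟩
  have hc_cov : ∀ p ∈ R, p.1 ∈ c.1 ∨ p.2 ∈ c.2 := (Finset.mem_filter.1 hc_mem).2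
  have hmin : ∀ CL' CR' : Finset V, (∀ p ∈ R, p.1 ∈ CL' ∨ p.2 ∈ CR') →
      c.1.card + c.2.card ≤ CL'.card + CR'.card := by
    intro CL' CR' h
    exact hc_min (CL', CR') (Finset.mem_filter.2 (by simpa using h))
  obtain ⟨F, hFinj, hF⟩ := hall_side R c.1 c.2 hc_cov hmin
  have hswap_cov : ∀ p ∈ R.image Prod.swap, p.1 ∈ c.2 ∨ p.2 ∈ c.1 := by
    intro p hp
    obtain ⟨q, hq, rfl⟩ := Finset.mem_image.1 hp
    exact (hc_cov q hq).symm
  have hswap_min : ∀ CL' CR' : Finset V,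
      (∀ p ∈ R.image Prod.swap, p.1 ∈ CL' ∨ p.2 ∈ CR') →
      c.2.card + c.1.card ≤ CL'.card + CR'.card := by
    intro CL' CR' h
    have : ∀ p ∈ R, p.1 ∈ CR' ∨ p.2 ∈ CL' := by
      intro p hp
      have := h p.swap (Finset.mem_image.2 ⟨p, hp, rfl⟩)
      simpa [or_comm] using this.symm
    have := hmin CR' CL' this
    omega
  obtain ⟨Gf, hGinj, hG⟩ := hall_side (R.image Prod.swap) c.2 c.1 hswap_cov hswap_min
  -- facts about F and Gf
  have hFR : ∀ x : {x // x ∈ c.1}, ((x : V), F x) ∈ R ∧ F x ∉ c.2 := by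
    intro x
    have := hF x
    rw [Finset.mem_sdiff] at this
    obtain ⟨p, hp, h1, h2⟩ : ∃ p ∈ R, p.1 = (x : V) ∧ p.2 = F x := by
      obtain ⟨p, hp, h2⟩ := Finset.mem_image.1 this.1
      have h1 := (Finset.mem_filter.1 hp).2
      exact ⟨p, (Finset.mem_filter.1 hp).1, h1, h2⟩
    have hpe : ((x : V), F x) = p := Prod.ext h1.symm h2.symm
    exact ⟨hpe ▸ hp, this.2⟩
  have hGR : ∀ y : {y // y ∈ c.2}, (Gf y, (y : V)) ∈ R ∧ Gf y ∉ c.1 := by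
    intro y
    have := hG y
    rw [Finset.mem_sdiff] at this
    obtain ⟨p, hp, h1, h2⟩ : ∃ p ∈ R.image Prod.swap, p.1 = (y : V) ∧ p.2 = Gf y := by
      obtain ⟨p, hp, h2⟩ := Finset.mem_image.1 this.1
      have h1 := (Finset.mem_filter.1 hp).2
      exact ⟨p, (Finset.mem_filter.1 hp).1, h1, h2⟩
    obtain ⟨q, hq, hqs⟩ := Finset.mem_image.1 hp
    refine ⟨?_, this.2⟩
    have : q = (Gf y, (y : V)) := by
      have e1 : q.2 = (y : V) := by rw [← h1, ← hqs]; rfl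
      have e2 : q.1 = Gf y := by rw [← h2, ← hqs]; rfl
      exact Prod.ext e2 e1
    rwa [this] at hq
  set M1 := c.1.attach.image (fun x : {x // x ∈ c.1} => ((x : V), F x)) with hM1
  set M2 := c.2.attach.image (fun y : {y // y ∈ c.2} => (Gf y, (y : V))) with hM2
  have hM1mem : ∀ p ∈ M1, ∃ x : {x // x ∈ c.1}, p = ((x : V), F x) := by
    intro p hp; obtain ⟨x, _, rfl⟩ := Finset.mem_image.1 hp; exact ⟨x, rfl⟩
  have hM2mem : ∀ p ∈ M2, ∃ y : {y // y ∈ c.2}, p = (Gf y, (y : V)) := by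
    intro p hp; obtain ⟨y, _, rfl⟩ := Finset.mem_image.1 hp; exact ⟨y, rfl⟩
  refine ⟨M1 ∪ M2, c.1, c.2, ?_, ?_, hc_cov, ?_⟩
  · intro p hp
    rcases Finset.mem_union.1 hp with h | h
    · obtain ⟨x, rfl⟩ := hM1mem p h; exact (hFR x).1
    · obtain ⟨y, rfl⟩ := hM2mem p h; exact (hGR y).1
  · intro p hp q hq hpq
    rcases Finset.mem_union.1 hp with h | h <;> rcases Finset.mem_union.1 hq with h' | h'
    · obtain ⟨x, rfl⟩ := hM1mem p h; obtain ⟨x', rfl⟩ := hM1mem q h'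
      have hxx : x ≠ x' := fun hc => hpq (by rw [hc])
      exact ⟨fun hv => hxx (Subtype.ext hv), fun hv => hxx (hFinj hv)⟩
    · obtain ⟨x, rfl⟩ := hM1mem p h; obtain ⟨y, rfl⟩ := hM2mem q h'
      constructor
      · intro hv; change (x : V) = Gf y at hv; exact (hGR y).2 (hv ▸ x.2)
      · intro hv; change F x = (y : V) at hv; exact (hFR x).2 (hv.symm ▸ y.2)
    · obtain ⟨y, rfl⟩ := hM2mem p h; obtain ⟨x, rfl⟩ := hM1mem q h'
      constructor
      · intro hv; change Gf y = (x : V) at hv; exact (hGR y).2 (hv.symm ▸ x.2)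
      · intro hv; change (y : V) = F x at hv; exact (hFR x).2 (hv ▸ y.2)
    · obtain ⟨y, rfl⟩ := hM2mem p h; obtain ⟨y', rfl⟩ := hM2mem q h'
      have hyy : y ≠ y' := fun hc => hpq (by rw [hc])
      exact ⟨fun hv => hyy (hGinj hv), fun hv => hyy (Subtype.ext hv)⟩
  · have hdisj : Disjoint M1 M2 := by
      rw [Finset.disjoint_left]
      intro p hp hp'
      obtain ⟨x, rfl⟩ := hM1mem p hp
      obtain ⟨y, hy⟩ := hM2mem _ hp'
      have : (x : V) = Gf y := congrArg Prod.fst hy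
      exact (hGR y).2 (this ▸ x.2)
    have hinj1 : Function.Injective (fun x : {x // x ∈ c.1} => ((x : V), F x)) :=
      fun x x' h => Subtype.ext (congrArg Prod.fst h)
    have hinj2 : Function.Injective (fun y : {y // y ∈ c.2} => (Gf y, (y : V))) :=
      fun y y' h => Subtype.ext (congrArg Prod.snd h)
    rw [Finset.card_union_of_disjoint hdisj, hM1, hM2,
      Finset.card_image_of_injective _ hinj1, Finset.card_image_of_injective _ hinj2,
      Finset.card_attach, Finset.card_attach]

section Graph
open SimpleGraph
variable (G : SimpleGraph V) [DecidableRel G.Adj]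

lemma edge_not_diag : ∀ e ∈ G.edgeFinset, ¬ e.IsDiag := fun e he =>
  G.not_isDiag_of_mem_edgeSet (SimpleGraph.mem_edgeFinset.1 he)

lemma filter_mem_eq_image_nbr (v : V) :
    G.edgeFinset.filter (fun e => v ∈ e) = (G.neighborFinset v).image (fun w => s(v, w)) := by
  ext e
  simp only [Finset.mem_filter, Finset.mem_image, SimpleGraph.mem_neighborFinset,
    SimpleGraph.mem_edgeFinset]
  constructor
  · rintro ⟨he, hv⟩
    induction e using Sym2.inductionOn with
    | hf a b =>
      have hadj : G.Adj a b := he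
      rcases Sym2.mem_iff.1 hv with rfl | rfl
      · exact ⟨b, hadj, rfl⟩
      · exact ⟨a, hadj.symm, Sym2.eq_swap⟩
  · rintro ⟨w, hadj, rfl⟩
    exact ⟨hadj, Sym2.mem_mk_left v w⟩

lemma sdeg_nbr (y : Sym2 V → ℝ) (v : V) :
    sdeg G.edgeFinset y v = ∑ w ∈ G.neighborFinset v, y s(v, w) := by
  rw [sdeg, ← Finset.sum_filter, filter_mem_eq_image_nbr]
  refine Finset.sum_image ?_
  intro w _ w' _ h
  rcases Sym2.eq_iff.1 h with ⟨-, h⟩ | ⟨h1, h2⟩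
  · exact h
  · rw [← h1, h2]

lemma sdeg_one (v : V) : sdeg G.edgeFinset (fun _ => (1:ℝ)) v = G.degree v := by
  rw [sdeg_nbr, Finset.sum_const, nsmul_eq_mul, mul_one, SimpleGraph.degree]

lemma closed_all (hconn : G.Connected) (S : Set V)
    (hcl : ∀ u w, G.Adj u w → u ∈ S → w ∈ S) {a : V} (ha : a ∈ S) (v : V) : v ∈ S := by
  have : ∀ {x y : V} (_ : G.Walk x y), x ∈ S → y ∈ S := by
    intro x y p
    induction p with
    | nil => exact id
    | cons h _ ih => exact fun hx => ih (hcl _ _ h hx)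
  exact (hconn a v).elim fun p => this p ha

lemma exists_adj (hconn : G.Connected) (hcard : 2 ≤ Fintype.card V) (v : V) :
    ∃ w, G.Adj v w := by
  obtain ⟨w, hw⟩ := Fintype.exists_ne_of_one_lt_card hcard v
  obtain ⟨p⟩ := hconn v w
  cases p with
  | nil => exact absurd rfl hw.symm
  | cons h p => exact ⟨_, h⟩

lemma matching_contra (hconn : G.Connected) (hE : 1 < G.edgeFinset.card)
    (hM : ∀ e₁ ∈ G.edgeFinset, ∀ e₂ ∈ G.edgeFinset, e₁ ≠ e₂ → ∀ v, v ∈ e₁ → v ∉ e₂) :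
    False := by
  obtain ⟨e₁, he₁, e₂, he₂, hne⟩ := Finset.one_lt_card.1 hE
  set S : Set V := {v | v ∈ e₁} with hS
  have hcl : ∀ u w, G.Adj u w → u ∈ S → w ∈ S := by
    intro u w hadj hu
    have hmem : s(u, w) ∈ G.edgeFinset := SimpleGraph.mem_edgeFinset.2 hadj
    by_cases hee : s(u, w) = e₁
    · show w ∈ e₁; rw [← hee]; exact Sym2.mem_mk_right u w
    · exact absurd (Sym2.mem_mk_left u w) (hM e₁ he₁ s(u,w) hmem (Ne.symm hee) u hu)
  have hx : e₂.out.1 ∈ S :=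
    closed_all G hconn S hcl (Sym2.out_fst_mem e₁) e₂.out.1
  exact hM e₁ he₁ e₂ he₂ hne e₂.out.1 hx (Sym2.out_fst_mem e₂)

lemma sum_degree_real : ∑ v, (G.degree v : ℝ) = 2 * (G.edgeFinset.card : ℝ) := by
  rw [← Nat.cast_sum]
  rw [SimpleGraph.sum_degrees_eq_twice_card_edges]
  push_cast; ring

end Graph

section Duality
open SimpleGraph
variable (G : SimpleGraph V) [DecidableRel G.Adj]

lemma strong_duality :
    ∃ (y : Sym2 V → ℝ) (f : V → ℝ),
      (∀ e, 0 ≤ y e) ∧ (∀ v, sdeg G.edgeFinset y v ≤ 1) ∧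
      (∀ v, 0 ≤ f v) ∧ (∀ u v, s(u, v) ∈ G.edgeFinset → 1 ≤ f u + f v) ∧
      (∑ e ∈ G.edgeFinset, y e = ∑ v, f v) := by
  classical
  obtain ⟨M, CL, CR, hMR, hMm, hcov, hcard⟩ :=
    konig (Finset.univ.filter (fun p : V × V => s(p.1, p.2) ∈ G.edgeFinset))
  have hRmem : ∀ p : V × V, p ∈ (Finset.univ.filter
      (fun p : V × V => s(p.1, p.2) ∈ G.edgeFinset)) ↔ s(p.1, p.2) ∈ G.edgeFinset := by
    intro p; simp
  set y : Sym2 V → ℝ := Sym2.lift ⟨fun u v =>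
    (if (u, v) ∈ M then (1:ℝ)/2 else 0) + (if (v, u) ∈ M then (1:ℝ)/2 else 0),
    fun u v => by dsimp; exact add_comm _ _⟩ with hy
  set f : V → ℝ := fun v =>
    (if v ∈ CL then (1:ℝ)/2 else 0) + (if v ∈ CR then (1:ℝ)/2 else 0) with hf
  have hymk : ∀ u v : V, y s(u, v) =
      (if (u, v) ∈ M then (1:ℝ)/2 else 0) + (if (v, u) ∈ M then (1:ℝ)/2 else 0) := by
    intro u v; rw [hy]; rfl
  have hy0 : ∀ e, 0 ≤ y e := by
    intro e
    induction e using Sym2.inductionOn with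
    | hf u v => rw [hymk]; split <;> split <;> norm_num
  have hf0 : ∀ v, 0 ≤ f v := by
    intro v; rw [hf]; dsimp; split <;> split <;> norm_num
  refine ⟨y, f, hy0, ?_, hf0, ?_, ?_⟩
  · -- fractional matching constraint
    intro v
    rw [sdeg_nbr]
    have : ∀ w ∈ G.neighborFinset v, y s(v, w) =
        (if (v, w) ∈ M then (1:ℝ)/2 else 0) + (if (w, v) ∈ M then (1:ℝ)/2 else 0) :=
      fun w _ => hymk v w
    rw [Finset.sum_congr rfl this, Finset.sum_add_distrib]
    have h1 : ∑ w ∈ G.neighborFinset v, (if (v, w) ∈ M then (1:ℝ)/2 else 0) ≤ 1/2 := by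
      refine sum_indicator_le _ _ (by norm_num) ?_
      intro a _ ha b _ hb
      by_contra hab
      have := (hMm _ ha _ hb (fun hc => hab (congrArg Prod.snd hc))).1
      exact this rfl
    have h2 : ∑ w ∈ G.neighborFinset v, (if (w, v) ∈ M then (1:ℝ)/2 else 0) ≤ 1/2 := by
      refine sum_indicator_le _ _ (by norm_num) ?_
      intro a _ ha b _ hb
      by_contra hab
      have := (hMm _ ha _ hb (fun hc => hab (congrArg Prod.fst hc))).2
      exact this rfl
    linarith
  · -- cover
    intro u v huv
    have c1 : u ∈ CL ∨ v ∈ CR := by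
      refine hcov (u, v) ((hRmem (u, v)).2 ?_); exact huv
    have c2 : v ∈ CL ∨ u ∈ CR := by
      refine hcov (v, u) ((hRmem (v, u)).2 ?_); rwa [Sym2.eq_swap]
    simp only [hf]
    split_ifs <;> norm_num <;> tauto
  · -- equal value
    have hmap : ∀ p ∈ M, s(p.1, p.2) ∈ G.edgeFinset := by
      intro p hp; exact (hRmem p).1 (hMR hp)
    have hfib := Finset.card_eq_sum_card_fiberwise hmap
    have hyfib : ∀ e ∈ G.edgeFinset, y e =
        ((M.filter (fun p => s(p.1, p.2) = e)).card : ℝ) / 2 := by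
      intro e he
      have hnd := edge_not_diag G e he
      induction e using Sym2.inductionOn with
      | hf u v =>
        have huv : u ≠ v := by simpa [Sym2.mk_isDiag_iff] using hnd
        have hfil : M.filter (fun p => s(p.1, p.2) = s(u, v)) =
            M.filter (fun p => p = (u, v)) ∪ M.filter (fun p => p = (v, u)) := by
          rw [← Finset.filter_or]
          refine Finset.filter_congr fun p _ => ?_
          constructor
          · intro h
            rcases Sym2.eq_iff.1 h with ⟨h1, h2⟩ | ⟨h1, h2⟩
            · left; exact Prod.ext h1 h2
            · right; exact Prod.ext h1 h2
          · rintro (rfl | rfl)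
            · rfl
            · exact Sym2.eq_swap
        have hdisj : Disjoint (M.filter (fun p => p = (u, v)))
            (M.filter (fun p => p = (v, u))) := by
          rw [Finset.disjoint_left]
          rintro p hp hp'
          have h1 := (Finset.mem_filter.1 hp).2
          have h2 := (Finset.mem_filter.1 hp').2
          rw [h1] at h2
          exact huv (congrArg Prod.fst h2)
        rw [hymk, hfil, Finset.card_union_of_disjoint hdisj,
          Finset.filter_eq' M (u, v), Finset.filter_eq' M (v, u)]
        split <;> split <;> simp <;> norm_num
    rw [Finset.sum_congr rfl hyfib]
    have hsumf : ∑ v, f v = ((CL.card : ℝ) + CR.card) / 2 := by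
      rw [hf]
      rw [Finset.sum_add_distrib]
      rw [Finset.sum_ite_mem, Finset.sum_ite_mem, Finset.univ_inter, Finset.univ_inter,
        Finset.sum_const, Finset.sum_const, nsmul_eq_mul, nsmul_eq_mul]
      ring
    rw [hsumf]
    rw [← Finset.sum_div]
    rw [← Nat.cast_sum, ← hfib, ← hcard]
    push_cast; ring

end Duality

section Optimal
variable (G : SimpleGraph V) [DecidableRel G.Adj]

lemma exists_optimal_pair :
    ∃ (y : Sym2 V → ℝ) (f : V → ℝ),
      (∀ e, 0 ≤ y e) ∧ (∀ v, sdeg G.edgeFinset y v ≤ 1) ∧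
      (∀ v, 0 ≤ f v) ∧ (∀ u v, s(u, v) ∈ G.edgeFinset → 1 ≤ f u + f v) ∧
      (∑ e ∈ G.edgeFinset, y e = MVC V 1 G.edgeFinset) ∧
      (∑ v, f v = MVC V 1 G.edgeFinset) := by
  obtain ⟨y, f, h1, h2, h3, h4, h5⟩ := strong_duality G
  have hle := weak_duality G.edgeFinset (edge_not_diag G) y (fun e _ => h1 e) h2
  have hge := MVC_le_cover (lam := 1) (by norm_num) G.edgeFinset f h3 h4
  exact ⟨y, f, h1, h2, h3, h4, by linarith, by linarith⟩

lemma exists_kernel (Ed : Finset (Sym2 V)) (hbig : Fintype.card V < Ed.card) :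
    ∃ z : Sym2 V → ℝ, (∃ e ∈ Ed, z e ≠ 0) ∧ (∀ v, sdeg Ed z v = 0) := by
  classical
  set A : Matrix V {e // e ∈ Ed} ℝ := fun v e => if v ∈ e.val then 1 else 0 with hA
  have hnotinj : ¬ Function.Injective A.mulVecLin := by
    intro hinj
    have hle := LinearMap.finrank_le_finrank_of_injective hinj
    rw [Module.finrank_pi, Module.finrank_pi, Fintype.card_coe] at hle
    omega
  rw [Function.not_injective_iff] at hnotinj
  obtain ⟨a, b, hab, hne⟩ := hnotinj
  set z0 : {e // e ∈ Ed} → ℝ := a - b with hz0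
  have hz0ne : z0 ≠ 0 := sub_ne_zero.2 hne
  have hz0ker : A.mulVecLin z0 = 0 := by rw [hz0, map_sub, hab, sub_self]
  set z : Sym2 V → ℝ := fun e => if h : e ∈ Ed then z0 ⟨e, h⟩ else 0 with hz
  refine ⟨z, ?_, ?_⟩
  · obtain ⟨e0, he0⟩ := Function.ne_iff.1 hz0ne
    refine ⟨e0.val, e0.2, ?_⟩
    rw [hz]; dsimp; rw [if_pos e0.2]
    simpa using he0
  · intro v
    have hv : A.mulVec z0 v = 0 := by
      have := congrFun hz0ker v
      simpa [Matrix.mulVecLin_apply] using this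
    have hv' : ∑ e ∈ Ed.attach, A v e * z0 e = 0 := by
      have h2 : A.mulVec z0 v = ∑ e ∈ Ed.attach, A v e * z0 e := by
        simp [Matrix.mulVec, dotProduct, Finset.univ_eq_attach]
      rw [← h2, hv]
    have hcongr : (∑ x ∈ Ed.attach, if v ∈ (x : Sym2 V) then z x else 0)
        = ∑ e ∈ Ed.attach, A v e * z0 e := by
      refine Finset.sum_congr rfl fun e _ => ?_
      have hze : z e.val = z0 e := by rw [hz]; dsimp; rw [if_pos e.2]
      rw [hze, hA]
      dsimp
      split <;> simp
    rw [sdeg, ← Finset.sum_attach Ed (fun e => if v ∈ e then z e else 0), hcongr, hv']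

lemma perturb (Ed : Finset (Sym2 V)) (hloop : ∀ e ∈ Ed, ¬ e.IsDiag)
    (y : Sym2 V → ℝ) (hy : ∀ e ∈ Ed, 0 < y e)
    (z : Sym2 V → ℝ) (hzne : ∃ e ∈ Ed, z e ≠ 0) (hzker : ∀ v, sdeg Ed z v = 0) :
    ∃ y' : Sym2 V → ℝ, (∀ e ∈ Ed, 0 ≤ y' e) ∧ (∀ v, sdeg Ed y' v = sdeg Ed y v) ∧
      (∑ e ∈ Ed, y' e = ∑ e ∈ Ed, y e) ∧ ∃ e ∈ Ed, y' e = 0 := by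
  classical
  have hneg : ∀ v, sdeg Ed (fun e => - z e) v = 0 := by
    intro v
    have h1 := sdeg_sub Ed (fun _ => 0) z 1 v
    simp only [zero_sub, one_mul] at h1
    have h2 : sdeg Ed (fun _ => (0:ℝ)) v = 0 := by
      rw [sdeg]; refine Finset.sum_eq_zero fun e _ => by split <;> rfl
    rw [h1, h2, hzker v]; ring
  have hex : ∃ w : Sym2 V → ℝ, (∀ v, sdeg Ed w v = 0) ∧ ∃ e ∈ Ed, 0 < w e := by
    obtain ⟨e0, he0, hz0⟩ := hzne
    rcases lt_or_gt_of_ne hz0 with h | h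
    · exact ⟨fun e => - z e, hneg, e0, he0, by dsimp only; linarith⟩
    · exact ⟨z, hzker, e0, he0, h⟩
  obtain ⟨w, hwker, e0, he0, hw0⟩ := hex
  set T := Ed.filter (fun e => 0 < w e) with hT
  have hTne : T.Nonempty := ⟨e0, Finset.mem_filter.2 ⟨he0, hw0⟩⟩
  obtain ⟨estar, hestar, hmin⟩ := Finset.exists_min_image T (fun e => y e / w e) hTne
  have hestarEd : estar ∈ Ed := (Finset.mem_filter.1 hestar).1
  have hwstar : 0 < w estar := (Finset.mem_filter.1 hestar).2
  set t := y estar / w estar with ht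
  have ht0 : 0 < t := div_pos (hy estar hestarEd) hwstar
  refine ⟨fun e => y e - t * w e, ?_, ?_, ?_, estar, hestarEd, ?_⟩
  · intro e he
    dsimp only
    by_cases hwe : 0 < w e
    · have hmem : e ∈ T := Finset.mem_filter.2 ⟨he, hwe⟩
      have hmm := hmin e hmem
      have hkey : t * w e ≤ y e := by
        rw [ht]
        calc y estar / w estar * w e ≤ y e / w e * w e :=
              mul_le_mul_of_nonneg_right hmm (le_of_lt hwe)
          _ = y e := by field_simp
      linarith
    · push_neg at hwe
      have := hy e he
      nlinarith
  · intro v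
    rw [sdeg_sub, hwker, mul_zero, sub_zero]
  · have h2 := sum_eq_half_sum_sdeg Ed hloop (fun e => y e - t * w e)
    have h3 := sum_eq_half_sum_sdeg Ed hloop y
    have h4 : ∑ v, sdeg Ed (fun e => y e - t * w e) v = ∑ v, sdeg Ed y v := by
      refine Finset.sum_congr rfl fun v _ => ?_
      rw [sdeg_sub, hwker, mul_zero, sub_zero]
    linarith
  · dsimp only; rw [ht]; field_simp; ring

end Optimal

section Cyc
variable (G : SimpleGraph V) [DecidableRel G.Adj]

lemma cyc (hconn : G.Connected) (hdeg : ∀ v, G.degree v = 2) :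
    Odd (Fintype.card V) ∨ ∃ c : V → Bool, ∀ u v, G.Adj u v → c u ≠ c v := by
  classical
  have hnev : Nonempty V := hconn.nonempty
  obtain ⟨v0⟩ := hnev
  have hcard2 : ∀ v, (G.neighborFinset v).card = 2 := fun v => by
    rw [SimpleGraph.card_neighborFinset_eq_degree]; exact hdeg v
  have hnb : ∀ v, (G.neighborFinset v).Nonempty := fun v =>
    Finset.card_pos.1 (by rw [hcard2]; norm_num)
  set nxt : V → V → V := fun prev cur =>
    if h : ((G.neighborFinset cur).erase prev).Nonempty then h.choose else cur with hnxt
  have hnxt_spec : ∀ prev cur, G.Adj cur prev →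
      G.Adj cur (nxt prev cur) ∧ nxt prev cur ≠ prev := by
    intro prev cur hadj
    have hmem : prev ∈ G.neighborFinset cur := by simpa using hadj
    have hpos : ((G.neighborFinset cur).erase prev).Nonempty := by
      rw [← Finset.card_pos, Finset.card_erase_of_mem hmem, hcard2]; norm_num
    have hch := hpos.choose_spec
    rw [Finset.mem_erase] at hch
    rw [hnxt]; dsimp; rw [dif_pos hpos]
    exact ⟨by simpa using hch.2, hch.1⟩
  have huniq : ∀ prev cur w, G.Adj cur prev → G.Adj cur w → w ≠ prev → w = nxt prev cur := by
    intro prev cur w h1 h2 hwne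
    have hs := hnxt_spec prev cur h1
    have hsub : ({prev, nxt prev cur} : Finset V) ⊆ G.neighborFinset cur := by
      intro x hx
      rcases Finset.mem_insert.1 hx with rfl | hx
      · simpa using h1
      · rw [Finset.mem_singleton.1 hx]; simpa using hs.1
    have hcardp : ({prev, nxt prev cur} : Finset V).card = 2 := by
      rw [Finset.card_insert_of_notMem (by simp [Ne.symm hs.2]), Finset.card_singleton]
    have heq : ({prev, nxt prev cur} : Finset V) = G.neighborFinset cur :=
      Finset.eq_of_subset_of_card_le hsub (by rw [hcard2, hcardp])
    have hwmem : w ∈ G.neighborFinset cur := by simpa using h2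
    rw [← heq] at hwmem
    rcases Finset.mem_insert.1 hwmem with rfl | hw
    · exact absurd rfl hwne
    · exact Finset.mem_singleton.1 hw
  set st : ℕ → V × V :=
    fun n => Nat.rec (v0, (hnb v0).choose) (fun _ p => (p.2, nxt p.1 p.2)) n with hst
  set seq : ℕ → V := fun n => (st n).1 with hseqdef
  have hseq0 : seq 0 = v0 := rfl
  have hseqS : ∀ n, seq (n+1) = (st n).2 := fun n => rfl
  have hs2 : ∀ n, seq (n+2) = nxt (seq n) (seq (n+1)) := fun n => rfl
  have hadj : ∀ n, G.Adj (seq n) (seq (n+1)) := by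
    intro n
    induction n with
    | zero =>
      have := (hnb v0).choose_spec
      rw [SimpleGraph.mem_neighborFinset] at this
      exact this
    | succ m ih =>
      rw [hs2 m]
      exact (hnxt_spec (seq m) (seq (m+1)) ih.symm).1
  have hne2 : ∀ n, seq (n+2) ≠ seq n := by
    intro n
    rw [hs2 n]
    exact (hnxt_spec (seq n) (seq (n+1)) (hadj n).symm).2
  have hconsec : ∀ n, seq n ≠ seq (n+1) := fun n => (hadj n).ne
  have huniq' : ∀ n w, G.Adj (seq (n+1)) w → w = seq n ∨ w = seq (n+2) := by
    intro n w hw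
    by_cases hwn : w = seq n
    · exact Or.inl hwn
    · right
      rw [hs2 n]
      exact huniq (seq n) (seq (n+1)) w (hadj n).symm hw hwn
  -- pigeonhole: a repeat exists
  have hex : ∃ k, 0 < k ∧ ∃ j, j < k ∧ seq k = seq j := by
    have hmap : ∀ i ∈ Finset.range (Fintype.card V + 1), seq i ∈ (Finset.univ : Finset V) :=
      fun i _ => Finset.mem_univ _
    have hlt : (Finset.univ : Finset V).card < (Finset.range (Fintype.card V + 1)).card := by
      rw [Finset.card_range, Finset.card_univ]; omega
    obtain ⟨i, _, j, _, hij, hseqeq⟩ :=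
      Finset.exists_ne_map_eq_of_card_lt_of_maps_to hlt hmap
    rcases Nat.lt_or_ge i j with h | h
    · exact ⟨j, by omega, i, h, hseqeq.symm⟩
    · have h' : j < i := by omega
      exact ⟨i, by omega, j, h', hseqeq⟩
  set n := Nat.find hex with hn
  obtain ⟨hn0, j, hjn, hretj⟩ := Nat.find_spec hex
  rw [← hn] at hn0 hjn hretj
  have hmin : ∀ m, m < n → ¬(0 < m ∧ ∃ j, j < m ∧ seq m = seq j) := fun m hm => Nat.find_min hex hm
  have hn1 : n ≠ 1 := by
    intro h
    rw [h] at hretj hjn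
    interval_cases j
    exact hconsec 0 hretj.symm
  have hn2 : 2 ≤ n := by omega
  -- the first repeat is the start
  have hj0 : j = 0 := by
    by_contra hj
    have hj1 : 1 ≤ j := by omega
    -- j ≤ n - 2
    have hjn1 : j ≠ n - 1 := by
      intro h
      have : n = (n-1) + 1 := by omega
      rw [this, h] at hretj
      exact hconsec (n-1) hretj.symm
    have hjn2 : j + 2 ≤ n := by omega
    obtain ⟨j', rfl⟩ : ∃ j', j = j' + 1 := ⟨j - 1, by omega⟩
    obtain ⟨m, hm⟩ : ∃ m, n = m + 1 := ⟨n - 1, by omega⟩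
    have hadjw : G.Adj (seq (j' + 1)) (seq m) := by
      have : G.Adj (seq m) (seq n) := by rw [hm]; exact hadj m
      rw [hretj] at this
      exact this.symm
    rcases huniq' j' (seq m) hadjw with h | h
    · exact hmin m (by omega) ⟨by omega, j', by omega, h⟩
    · -- seq m = seq (j' + 2) = seq (j+1)
      by_cases hcase : j' + 2 = m
      · -- j = n - 2, so seq n = seq (n-2) contradicting hne2
        have : seq (j' + 1 + 2) = seq (j' + 1) := by
          rw [show j' + 1 + 2 = (j' + 2) + 1 from rfl, hcase, ← hm, hretj]
        exact hne2 (j' + 1) this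
      · exact hmin m (by omega) ⟨by omega, j' + 2, by omega, h⟩
  rw [hj0] at hretj
  have hret : seq n = v0 := by rw [hretj, hseq0]
  have hinj : ∀ i j, i < j → j < n → seq i ≠ seq j := by
    intro i j hij hjn heq
    exact hmin j (by omega) ⟨by omega, i, hij, heq.symm⟩
  have hn3 : 3 ≤ n := by
    rcases Nat.lt_or_ge n 3 with h | h
    · exfalso
      have : n = 2 := by omega
      rw [this] at hret
      exact hne2 0 (by norm_num [hret, hseq0])
    · exact h
  -- wrap-around: seq (n+1) = seq 1
  have hwrap : seq (n+1) = seq 1 := by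
    have h1 : G.Adj (seq n) (seq 1) := by
      rw [hret, ← hseq0]; exact hadj 0
    have h2 : seq 1 ≠ seq (n-1) := by
      intro h
      exact hinj 1 (n-1) (by omega) (by omega) h
    obtain ⟨m, hm⟩ : ∃ m, n = m + 1 := ⟨n - 1, by omega⟩
    have hm' : m = n - 1 := by omega
    have hadjcur : G.Adj (seq (m+1)) (seq m) := (hadj m).symm
    have hadj1 : G.Adj (seq (m+1)) (seq 1) := by rw [← hm]; exact h1
    have hne1 : seq 1 ≠ seq m := by rw [hm']; exact h2
    have hkey := huniq (seq m) (seq (m+1)) (seq 1) hadjcur hadj1 hne1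
    rw [← hs2 m] at hkey
    rw [show n + 1 = m + 2 by omega]
    exact hkey.symm
  -- the image of seq is everything
  set S : Set V := {v | ∃ i, i < n ∧ seq i = v} with hS
  have hclosed : ∀ u w, G.Adj u w → u ∈ S → w ∈ S := by
    rintro u w hadjuw ⟨i, hi, rfl⟩
    rcases Nat.eq_zero_or_pos i with rfl | hipos
    · -- neighbors of seq 0 = seq n
      have hadjn : G.Adj (seq n) w := by rw [hret, ← hseq0]; exact hadjuw
      obtain ⟨m, hm⟩ : ∃ m, n = m + 1 := ⟨n - 1, by omega⟩
      rw [hm] at hadjn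
      rcases huniq' m w hadjn with h | h
      · exact ⟨m, by omega, h.symm⟩
      · rw [show m + 2 = n + 1 by omega, hwrap] at h
        exact ⟨1, by omega, h.symm⟩
    · obtain ⟨k, rfl⟩ : ∃ k, i = k + 1 := ⟨i - 1, by omega⟩
      rcases huniq' k w hadjuw with h | h
      · exact ⟨k, by omega, h.symm⟩
      · rcases Nat.lt_or_ge (k+2) n with hlt | hge
        · exact ⟨k + 2, hlt, h.symm⟩
        · have : k + 2 = n := by omega
          rw [this, hretj] at h
          exact ⟨0, by omega, h.symm⟩
  have hSall : ∀ v, v ∈ S := closed_all G hconn S hclosed ⟨0, by omega, hseq0⟩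
  -- card V = n
  have huniveq : (Finset.univ : Finset V) = (Finset.range n).image seq := by
    ext v
    simp only [Finset.mem_univ, true_iff, Finset.mem_image, Finset.mem_range]
    obtain ⟨i, hi, hv⟩ := hSall v
    exact ⟨i, hi, hv⟩
  have hcardV : Fintype.card V = n := by
    rw [← Finset.card_univ, huniveq, Finset.card_image_of_injOn, Finset.card_range]
    intro a ha b hb hab
    simp only [Finset.coe_range, Set.mem_Iio] at ha hb
    rcases Nat.lt_trichotomy a b with h | h | h
    · exact absurd hab (hinj a b h hb)
    · exact h
    · exact absurd hab.symm (hinj b a h ha)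
  rcases Nat.even_or_odd n with heven | hodd
  · -- even: 2-coloring
    right
    have hidx : ∀ v : V, ∃ i, seq i = v ∧ i < n := by
      intro v; obtain ⟨i, hi, hv⟩ := hSall v; exact ⟨i, hv, hi⟩
    set idx : V → ℕ := fun v => Nat.find (hidx v) with hidxdef
    have hidx1 : ∀ v, seq (idx v) = v := fun v => (Nat.find_spec (hidx v)).1
    have hidx2 : ∀ v, idx v < n := fun v => (Nat.find_spec (hidx v)).2
    have hidxu : ∀ v i, i < n → seq i = v → idx v = i := by
      intro v i hi hv
      rcases Nat.lt_trichotomy (idx v) i with h | h | h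
      · exact absurd (by rw [hidx1 v, hv]) (hinj _ _ h hi)
      · exact h
      · exact absurd (by rw [hv, hidx1 v]) (hinj _ _ h (hidx2 v))
    refine ⟨fun v => decide (idx v % 2 = 1), ?_⟩
    intro u v hadjuv
    have hne_mod : idx u % 2 ≠ idx v % 2 := by
      have hiu : idx u < n := hidx2 u
      have hadji : G.Adj (seq (idx u)) v := by rw [hidx1]; exact hadjuv
      rcases Nat.eq_zero_or_pos (idx u) with h0 | hpos
      · -- idx u = 0 : v = seq (n-1) or seq 1
        rw [h0] at hadji
        have hadjn : G.Adj (seq n) v := by rw [hret, ← hseq0]; exact hadji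
        obtain ⟨m, hm⟩ : ∃ m, n = m + 1 := ⟨n - 1, by omega⟩
        rw [hm] at hadjn
        rcases huniq' m v hadjn with h | h
        · have := hidxu v m (by omega) h.symm
          obtain ⟨t, ht⟩ := heven
          omega
        · rw [show m + 2 = n + 1 by omega, hwrap] at h
          have := hidxu v 1 (by omega) h.symm
          omega
      · obtain ⟨k, hk⟩ : ∃ k, idx u = k + 1 := ⟨idx u - 1, by omega⟩
        rw [hk] at hadji
        rcases huniq' k v hadji with h | h
        · have := hidxu v k (by omega) h.symm
          omega
        · rcases Nat.lt_or_ge (k+2) n with hlt | hge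
          · have := hidxu v (k+2) hlt h.symm
            omega
          · have hkn : k + 2 = n := by omega
            rw [hkn, hretj] at h
            have := hidxu v 0 (by omega) h.symm
            obtain ⟨t, ht⟩ := heven
            omega
    simp only [ne_eq, decide_eq_decide]
    omega
  · left
    rw [hcardV]
    exact hodd

end Cyc

section Lower
variable (G : SimpleGraph V) [DecidableRel G.Adj]

lemma half_lower (hreg : ∀ v, G.degree v = 2) :
    (G.edgeFinset.card : ℝ) / 2 ≤ MVC V (1/2) G.edgeFinset := by
  refine le_MVC fun fV fE h0V h0E hcov => ?_
  have hcov' := cover_of_feasible hcov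
  have h1 : (G.edgeFinset.card : ℝ) ≤ ∑ e ∈ G.edgeFinset, (vsum fV e + fE e) := by
    calc (G.edgeFinset.card : ℝ) = ∑ _e ∈ G.edgeFinset, (1:ℝ) := by
          rw [Finset.sum_const, nsmul_eq_mul, mul_one]
      _ ≤ _ := Finset.sum_le_sum hcov'
  have h2 : ∑ e ∈ G.edgeFinset, vsum fV e = ∑ v, fV v * 2 := by
    have := sum_mul_vsum G.edgeFinset (edge_not_diag G) (fun _ => (1:ℝ)) fV
    simp only [one_mul] at this
    rw [this]
    refine Finset.sum_congr rfl fun v _ => ?_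
    rw [sdeg_one, hreg v]
    norm_num
  rw [Finset.sum_add_distrib, h2] at h1
  have h3 : ∑ v, fV v * 2 = 2 * ∑ v, fV v := by rw [Finset.mul_sum]; exact Finset.sum_congr rfl fun v _ => by ring
  rw [h3] at h1
  linarith

end Lower

section Bip
variable (G : SimpleGraph V) [DecidableRel G.Adj]

lemma bip_contra (hconn : G.Connected) (hE : 1 < G.edgeFinset.card)
    (H : ∀ y : Sym2 V → ℝ, (∀ e ∈ G.edgeFinset, 0 ≤ y e) →
      (∀ v, sdeg G.edgeFinset y v ≤ 1) →
      (∑ e ∈ G.edgeFinset, y e = MVC V 1 G.edgeFinset) → ∀ e ∈ G.edgeFinset, y e ≠ 0)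
    (c : V → Bool) (hc : ∀ u v, G.Adj u v → c u ≠ c v) : False := by
  classical
  obtain ⟨M, CL, CR, hMR, hMm, hcov, hcard⟩ :=
    konig (Finset.univ.filter (fun p : V × V => s(p.1, p.2) ∈ G.edgeFinset ∧ c p.1 = false))
  set M' := M.image (fun p : V × V => s(p.1, p.2)) with hM'
  have hMR' : ∀ p ∈ M, s(p.1, p.2) ∈ G.edgeFinset ∧ c p.1 = false := by
    intro p hp
    exact (Finset.mem_filter.1 (hMR hp)).2
  have hcfalse : ∀ p ∈ M, c p.1 = false ∧ c p.2 = true := by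
    intro p hp
    have h1 := (hMR' p hp).2
    have h2 : G.Adj p.1 p.2 := SimpleGraph.mem_edgeFinset.1 (hMR' p hp).1
    have h3 := hc _ _ h2
    refine ⟨h1, ?_⟩
    cases hc2 : c p.2
    · rw [h1, hc2] at h3; exact absurd rfl h3
    · rfl
  have hM'sub : M' ⊆ G.edgeFinset := by
    intro e he
    obtain ⟨p, hp, rfl⟩ := Finset.mem_image.1 he
    exact (hMR' p hp).1
  -- two distinct edges of M' cannot share a vertex
  have hshare : ∀ a ∈ M', ∀ b ∈ M', ∀ v : V, v ∈ a → v ∈ b → a = b := by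
    intro a ha b hb v hva hvb
    obtain ⟨p, hp, rfl⟩ := Finset.mem_image.1 ha
    obtain ⟨q, hq, rfl⟩ := Finset.mem_image.1 hb
    have hpq : p = q := by
      by_contra hne
      have hmm := hMm p hp q hq hne
      rcases Sym2.mem_iff.1 hva with rfl | rfl
      · rcases Sym2.mem_iff.1 hvb with h | h
        · exact hmm.1 h.symm.symm
        · have h1 := (hcfalse p hp).1
          have h2 := (hcfalse q hq).2
          rw [← h] at h2
          rw [h1] at h2
          exact Bool.false_ne_true h2
      · rcases Sym2.mem_iff.1 hvb with h | h
        · have h1 := (hcfalse p hp).2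
          have h2 := (hcfalse q hq).1
          rw [← h] at h2
          rw [h1] at h2
          exact Bool.false_ne_true h2.symm
        · exact hmm.2 h.symm.symm
    rw [hpq]
  set yM : Sym2 V → ℝ := fun e => if e ∈ M' then 1 else 0 with hyM
  have hyM0 : ∀ e ∈ G.edgeFinset, 0 ≤ yM e := by
    intro e _; rw [hyM]; dsimp; split <;> norm_num
  have hyMσ : ∀ v, sdeg G.edgeFinset yM v ≤ 1 := by
    intro v
    rw [sdeg]
    have hrw : ∀ e ∈ G.edgeFinset, (if v ∈ e then yM e else 0)
        = if (v ∈ e ∧ e ∈ M') then (1:ℝ) else 0 := by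
      intro e _
      rw [hyM]; dsimp
      by_cases h1 : v ∈ e <;> by_cases h2 : e ∈ M' <;> simp [h1, h2]
    rw [Finset.sum_congr rfl hrw]
    refine sum_indicator_le _ _ zero_le_one ?_
    rintro a ha ⟨hva, haM⟩ b hb ⟨hvb, hbM⟩
    exact hshare a haM b hbM v hva hvb
  have hval : ∑ e ∈ G.edgeFinset, yM e = (M.card : ℝ) := by
    rw [hyM]
    rw [Finset.sum_ite_mem]
    rw [Finset.inter_eq_right.2 hM'sub]
    rw [Finset.sum_const, nsmul_eq_mul, mul_one]
    congr 1
    rw [hM']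
    refine Finset.card_image_of_injOn ?_
    intro p hp q hq hpq
    dsimp at hpq
    rcases Sym2.eq_iff.1 hpq with ⟨h1, h2⟩ | ⟨h1, h2⟩
    · exact Prod.ext h1 h2
    · have ha := (hcfalse p hp).1
      have hb := (hcfalse q hq).2
      rw [← h1] at hb
      rw [ha] at hb
      exact absurd hb Bool.false_ne_true
  set fC : V → ℝ := fun v => if v ∈ CL ∪ CR then 1 else 0 with hfC
  have hfC0 : ∀ v, 0 ≤ fC v := by
    intro v; rw [hfC]; dsimp; split <;> norm_num
  have hfC1 : ∀ v, v ∈ CL ∪ CR → fC v = 1 := by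
    intro v hv; rw [hfC]; dsimp; rw [if_pos hv]
  have hfCcov : ∀ u w, s(u, w) ∈ G.edgeFinset → 1 ≤ fC u + fC w := by
    intro u w hmem
    have hadj : G.Adj u w := SimpleGraph.mem_edgeFinset.1 hmem
    have hcu := hc u w hadj
    cases hcub : c u
    · have hR : (u, w) ∈ Finset.univ.filter
          (fun p : V × V => s(p.1, p.2) ∈ G.edgeFinset ∧ c p.1 = false) :=
        Finset.mem_filter.2 ⟨Finset.mem_univ _, hmem, hcub⟩
      rcases hcov _ hR with h | h
      · have := hfC1 u (Finset.mem_union_left _ h); have := hfC0 w; linarith [hfC1 u (Finset.mem_union_left _ h), hfC0 w]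
      · linarith [hfC1 w (Finset.mem_union_right _ h), hfC0 u]
    · have hcw : c w = false := by
        cases hcwb : c w
        · rfl
        · rw [hcub, hcwb] at hcu; exact absurd rfl hcu
      have hR : (w, u) ∈ Finset.univ.filter
          (fun p : V × V => s(p.1, p.2) ∈ G.edgeFinset ∧ c p.1 = false) := by
        refine Finset.mem_filter.2 ⟨Finset.mem_univ _, ?_, hcw⟩
        dsimp
        rwa [Sym2.eq_swap]
      rcases hcov _ hR with h | h
      · linarith [hfC1 w (Finset.mem_union_left _ h), hfC0 u]
      · linarith [hfC1 u (Finset.mem_union_right _ h), hfC0 w]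
  have hcover_le := MVC_le_cover (lam := 1) (by norm_num) G.edgeFinset fC hfC0 hfCcov
  have hsumfC : ∑ v, fC v ≤ (M.card : ℝ) := by
    rw [hfC]
    rw [Finset.sum_ite_mem, Finset.univ_inter, Finset.sum_const, nsmul_eq_mul, mul_one]
    have h1 : (CL ∪ CR).card ≤ CL.card + CR.card := Finset.card_union_le _ _
    rw [← hcard]
    exact_mod_cast h1
  have hwd := weak_duality G.edgeFinset (edge_not_diag G) yM hyM0 hyMσ
  have hyMval : ∑ e ∈ G.edgeFinset, yM e = MVC V 1 G.edgeFinset := by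
    have : MVC V 1 G.edgeFinset ≤ (M.card : ℝ) := le_trans hcover_le hsumfC
    rw [hval]
    rw [hval] at hwd
    linarith
  have hfullM := H yM hyM0 hyMσ hyMval
  have hEdM : ∀ e ∈ G.edgeFinset, e ∈ M' := by
    intro e he
    by_contra hx
    apply hfullM e he
    rw [hyM]; dsimp; rw [if_neg hx]
  refine matching_contra G hconn hE ?_
  intro e1 he1 e2 he2 hne12 v hv1 hv2
  exact hne12 (hshare e1 (hEdM e1 he1) e2 (hEdM e2 he2) v hv1 hv2)

end Bip

end MVCAux

open MVCAux

/-- For a connected graph `G` with more than one edge,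
`max(MVC_{1/2}(G), max_{e∈E} MVC_1(G∖e)) = MVC_1(G)`; moreover either `G` is an odd
cycle, in which case `MVC_{1/2}(G) = MVC_1(G) = |E|/2`, or some edge deletion preserves
the fractional vertex cover number. -/
theorem stmt13 (V : Type*) [Fintype V] [DecidableEq V] (G : SimpleGraph V)
    [DecidableRel G.Adj] (hconn : G.Connected) (hE : 1 < G.edgeFinset.card)
    (hne : G.edgeFinset.Nonempty) :
    max (MVC V (1 / 2) G.edgeFinset)
        (G.edgeFinset.sup' hne fun e => MVC V 1 (G.edgeFinset.erase e)) =
      MVC V 1 G.edgeFinset ∧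
    (((∀ v, G.degree v = 2) ∧ Odd (Fintype.card V) ∧
        MVC V (1 / 2) G.edgeFinset = MVC V 1 G.edgeFinset ∧
        MVC V 1 G.edgeFinset = (G.edgeFinset.card : ℝ) / 2) ∨
      ∃ e ∈ G.edgeFinset, MVC V 1 (G.edgeFinset.erase e) = MVC V 1 G.edgeFinset) := by
  classical
  have hloop := edge_not_diag G
  have herase_le : ∀ e ∈ G.edgeFinset, MVC V 1 (G.edgeFinset.erase e) ≤ MVC V 1 G.edgeFinset :=
    fun e _ => MVC_mono (by norm_num) (Finset.erase_subset e G.edgeFinset)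
  have hsup_le : (G.edgeFinset.sup' hne fun e => MVC V 1 (G.edgeFinset.erase e))
      ≤ MVC V 1 G.edgeFinset := Finset.sup'_le hne _ herase_le
  have hhalf_le : MVC V (1/2) G.edgeFinset ≤ MVC V 1 G.edgeFinset := MVC_half_le G.edgeFinset
  by_cases hgood : ∃ e ∈ G.edgeFinset, MVC V 1 (G.edgeFinset.erase e) = MVC V 1 G.edgeFinset
  · obtain ⟨e, he, heq⟩ := hgood
    constructor
    · refine le_antisymm (max_le hhalf_le hsup_le) ?_
      calc MVC V 1 G.edgeFinset = MVC V 1 (G.edgeFinset.erase e) := heq.symm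
        _ ≤ G.edgeFinset.sup' hne fun e => MVC V 1 (G.edgeFinset.erase e) :=
            Finset.le_sup' (fun e => MVC V 1 (G.edgeFinset.erase e)) he
        _ ≤ _ := le_max_right _ _
    · exact Or.inr ⟨e, he, heq⟩
  · push_neg at hgood
    -- every optimal fractional matching has full support
    have H : ∀ y : Sym2 V → ℝ, (∀ e ∈ G.edgeFinset, 0 ≤ y e) →
        (∀ v, sdeg G.edgeFinset y v ≤ 1) →
        (∑ e ∈ G.edgeFinset, y e = MVC V 1 G.edgeFinset) →
        ∀ e ∈ G.edgeFinset, y e ≠ 0 := by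
      intro y hy0 hyσ hyval e he hye
      refine hgood e he (le_antisymm (herase_le e he) ?_)
      have hsub : G.edgeFinset.erase e ⊆ G.edgeFinset := Finset.erase_subset e G.edgeFinset
      have hsum : ∑ e' ∈ G.edgeFinset.erase e, y e' = MVC V 1 G.edgeFinset := by
        rw [Finset.sum_erase _ hye, hyval]
      calc MVC V 1 G.edgeFinset = ∑ e' ∈ G.edgeFinset.erase e, y e' := hsum.symm
        _ ≤ MVC V 1 (G.edgeFinset.erase e) :=
            weak_duality _ (fun e' he' => hloop e' (hsub he'))
              y (fun e' he' => hy0 e' (hsub he'))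
              (fun v => le_trans (sdeg_mono hsub hy0 v) (hyσ v))
    obtain ⟨y0, f0, hy00, hy0σ, hf00, hf0cov, hy0val, hf0val⟩ := exists_optimal_pair G
    have hfull : ∀ e ∈ G.edgeFinset, 0 < y0 e := by
      intro e he
      rcases (hy00 e).lt_or_eq with h | h
      · exact h
      · exact absurd h.symm (H y0 (fun e _ => hy00 e) hy0σ hy0val e he)
    -- complementary slackness
    have hv1 : ∀ e ∈ G.edgeFinset, 1 ≤ vsum f0 e := by
      intro e he
      induction e using Sym2.inductionOn with
      | hf u w => simpa using hf0cov u w he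
    have chain1 : ∑ e ∈ G.edgeFinset, y0 e ≤ ∑ e ∈ G.edgeFinset, y0 e * vsum f0 e := by
      refine Finset.sum_le_sum fun e he => ?_
      have := hy00 e
      nlinarith [hv1 e he]
    have chain2 : ∑ e ∈ G.edgeFinset, y0 e * vsum f0 e = ∑ v, f0 v * sdeg G.edgeFinset y0 v :=
      sum_mul_vsum _ hloop _ _
    have chain3 : ∑ v, f0 v * sdeg G.edgeFinset y0 v ≤ ∑ v, f0 v := by
      refine Finset.sum_le_sum fun v _ => ?_
      have := hf00 v
      nlinarith [hy0σ v]
    have heq1 : ∑ e ∈ G.edgeFinset, y0 e = ∑ e ∈ G.edgeFinset, y0 e * vsum f0 e := by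
      linarith
    have heq2 : ∑ v, f0 v * sdeg G.edgeFinset y0 v = ∑ v, f0 v := by
      linarith
    have htight : ∀ e ∈ G.edgeFinset, vsum f0 e = 1 := by
      have hpt := (Finset.sum_eq_sum_iff_of_le (fun e he => by
        have := hy00 e; nlinarith [hv1 e he] : ∀ e ∈ G.edgeFinset, y0 e ≤ y0 e * vsum f0 e)).1
        heq1
      intro e he
      have h := (hpt e he).symm
      have hy := hfull e he
      have : y0 e * vsum f0 e = y0 e * 1 := by rw [mul_one]; linarith [h]
      exact mul_left_cancel₀ (ne_of_gt hy) this
    have hσ1 : ∀ v, 0 < f0 v → sdeg G.edgeFinset y0 v = 1 := by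
      have hpt := (Finset.sum_eq_sum_iff_of_le (fun v (_ : v ∈ Finset.univ) => by
        have := hf00 v; nlinarith [hy0σ v] : ∀ v ∈ Finset.univ,
          f0 v * sdeg G.edgeFinset y0 v ≤ f0 v)).1 heq2
      intro v hv
      have h := hpt v (Finset.mem_univ v)
      have : f0 v * sdeg G.edgeFinset y0 v = f0 v * 1 := by rw [mul_one]; linarith [h]
      exact mul_left_cancel₀ (ne_of_gt hv) this
    have hadj_t : ∀ u w, G.Adj u w → f0 u + f0 w = 1 := by
      intro u w huw
      have := htight s(u, w) (SimpleGraph.mem_edgeFinset.2 huw)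
      simpa using this
    by_cases hhalf : ∀ v, f0 v = 1/2
    · -- all-half cover
      have hcV2 : 2 ≤ Fintype.card V := by
        obtain ⟨e, he⟩ := hne
        have hnd := hloop e he
        induction e using Sym2.inductionOn with
        | hf u w =>
          have : u ≠ w := by simpa [Sym2.mk_isDiag_iff] using hnd
          exact Fintype.one_lt_card_iff.2 ⟨u, w, this⟩
      have hMVCval : MVC V 1 G.edgeFinset = (Fintype.card V : ℝ) / 2 := by
        rw [← hf0val]
        rw [Finset.sum_congr rfl (fun v _ => hhalf v), Finset.sum_const, nsmul_eq_mul,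
          Finset.card_univ]
        ring
      have hσall : ∀ v, sdeg G.edgeFinset y0 v = 1 := fun v =>
        hσ1 v (by rw [hhalf v]; norm_num)
      -- every vertex has degree exactly 2
      have hdeg2 : ∀ v, 2 ≤ G.degree v := by
        intro u
        by_contra hcon
        push_neg at hcon
        have hd1 : G.degree u = 1 := by
          have : 0 < G.degree u := by
            obtain ⟨w, hw⟩ := exists_adj G hconn hcV2 u
            rw [← SimpleGraph.card_neighborFinset_eq_degree]
            exact Finset.card_pos.2 ⟨w, (G.mem_neighborFinset u w).2 hw⟩
          omega
        obtain ⟨w, hw⟩ := Finset.card_eq_one.1 (show (G.neighborFinset u).card = 1 by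
          rw [SimpleGraph.card_neighborFinset_eq_degree]; exact hd1)
        have hadjuw : G.Adj u w := by
          rw [← SimpleGraph.mem_neighborFinset, hw]; exact Finset.mem_singleton_self w
        have hyuw : y0 s(u, w) = 1 := by
          have := hσall u
          rw [sdeg_nbr, hw, Finset.sum_singleton] at this
          exact this
        -- w also has degree 1 with unique neighbor u
        have hnbrw : G.neighborFinset w = {u} := by
          have hσw := hσall w
          rw [sdeg_nbr] at hσw
          have hmemu : u ∈ G.neighborFinset w := by
            rw [SimpleGraph.mem_neighborFinset]; exact hadjuw.symm
          have hsum := Finset.add_sum_erase _ (fun x => y0 s(w, x)) hmemu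
          have hswu : y0 s(w, u) = 1 := by rw [Sym2.eq_swap]; exact hyuw
          have hzero : ∑ x ∈ (G.neighborFinset w).erase u, y0 s(w, x) = 0 := by
            rw [← hsum] at hσw
            beta_reduce at hσw
            rw [hswu] at hσw
            linarith
          have hempty : (G.neighborFinset w).erase u = ∅ := by
            by_contra hcontra
            obtain ⟨x, hx⟩ := Finset.nonempty_of_ne_empty hcontra
            have hxadj : G.Adj w x := by
              have := Finset.mem_of_mem_erase hx
              rwa [SimpleGraph.mem_neighborFinset] at this
            have hpos : 0 < y0 s(w, x) := hfull _ (SimpleGraph.mem_edgeFinset.2 hxadj)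
            have hle : y0 s(w, x) ≤ ∑ x ∈ (G.neighborFinset w).erase u, y0 s(w, x) := by
              refine Finset.single_le_sum (f := fun x => y0 s(w, x)) (fun x' hx' => ?_) hx
              have hxadj' : G.Adj w x' := by
                have := Finset.mem_of_mem_erase hx'
                rwa [SimpleGraph.mem_neighborFinset] at this
              exact le_of_lt (hfull _ (SimpleGraph.mem_edgeFinset.2 hxadj'))
            linarith
          ext x
          simp only [Finset.mem_singleton]
          constructor
          · intro hx
            by_contra hxu
            have : x ∈ (G.neighborFinset w).erase u := Finset.mem_erase.2 ⟨hxu, hx⟩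
            rw [hempty] at this
            exact absurd this (Finset.notMem_empty x)
          · rintro rfl; exact hmemu
        -- the component is just {u, w}, so only one edge
        have hclosed : ∀ a b, G.Adj a b → (a ∈ ({u, w} : Set V)) → b ∈ ({u, w} : Set V) := by
          rintro a b hab (rfl | rfl)
          · have : b ∈ G.neighborFinset a := by rwa [SimpleGraph.mem_neighborFinset]
            rw [hw] at this
            right; exact Finset.mem_singleton.1 this
          · have : b ∈ G.neighborFinset a := by rwa [SimpleGraph.mem_neighborFinset]
            rw [hnbrw] at this
            left; exact Finset.mem_singleton.1 this
        have hall : ∀ v : V, v ∈ ({u, w} : Set V) :=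
          closed_all G hconn _ hclosed (Set.mem_insert u {w})
        have huniv : (Finset.univ : Finset V) = {u, w} := by
          ext x
          simp only [Finset.mem_univ, true_iff, Finset.mem_insert, Finset.mem_singleton]
          exact hall x
        have hdw : G.degree w = 1 := by
          rw [← SimpleGraph.card_neighborFinset_eq_degree, hnbrw, Finset.card_singleton]
        have hsumdeg := SimpleGraph.sum_degrees_eq_twice_card_edges G
        rw [huniv, Finset.sum_pair hadjuw.ne, hd1, hdw] at hsumdeg
        omega
      have hdeg2' : ∀ v, G.degree v ≤ 2 := by
        intro u
        by_contra hcon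
        push_neg at hcon
        have hbig : Fintype.card V < G.edgeFinset.card := by
          have hlt : ∑ _v : V, 2 < ∑ v, G.degree v := by
            refine Finset.sum_lt_sum (fun v _ => hdeg2 v) ⟨u, Finset.mem_univ u, hcon⟩
          rw [SimpleGraph.sum_degrees_eq_twice_card_edges, Finset.sum_const,
            Finset.card_univ, smul_eq_mul] at hlt
          omega
        obtain ⟨z, hzne, hzker⟩ := exists_kernel G.edgeFinset hbig
        obtain ⟨y', hy'0, hy'σ, hy'sum, e0, he0, hy'e0⟩ :=
          perturb G.edgeFinset hloop y0 hfull z hzne hzker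
        have hy'σ1 : ∀ v, sdeg G.edgeFinset y' v ≤ 1 := fun v => by
          rw [hy'σ v]; exact hy0σ v
        have hy'val : ∑ e ∈ G.edgeFinset, y' e = MVC V 1 G.edgeFinset := by
          rw [hy'sum, hy0val]
        exact H y' hy'0 hy'σ1 hy'val e0 he0 hy'e0
      have hreg : ∀ v, G.degree v = 2 := fun v => le_antisymm (hdeg2' v) (hdeg2 v)
      rcases cyc G hconn hreg with hodd | ⟨c, hc⟩
      · -- odd cycle case: the LEFT disjunct
        have hcardeq : G.edgeFinset.card = Fintype.card V := by
          have hsumdeg := SimpleGraph.sum_degrees_eq_twice_card_edges G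
          rw [Finset.sum_congr rfl (fun v _ => hreg v), Finset.sum_const,
            Finset.card_univ, smul_eq_mul] at hsumdeg
          omega
        have hval2 : MVC V 1 G.edgeFinset = (G.edgeFinset.card : ℝ) / 2 := by
          rw [hMVCval, hcardeq]
        have hhalfval : MVC V (1/2) G.edgeFinset = MVC V 1 G.edgeFinset := by
          refine le_antisymm hhalf_le ?_
          rw [hval2]
          exact half_lower G hreg
        constructor
        · rw [← hhalfval]
          exact max_eq_left (hsup_le.trans (le_of_eq hhalfval.symm))
        · exact Or.inl ⟨hreg, hodd, hhalfval, hval2⟩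
      · exact (bip_contra G hconn hE H c hc).elim
    · -- non-constant cover: bipartite, contradiction
      push_neg at hhalf
      obtain ⟨w0, hw0⟩ := hhalf
      have hallne : ∀ v, f0 v ≠ 1/2 := by
        have hclosed : ∀ a b, G.Adj a b → (a ∈ {x | f0 x ≠ 1/2}) → b ∈ {x | f0 x ≠ 1/2} := by
          intro a b hab ha
          have := hadj_t a b hab
          intro hb
          apply ha
          show f0 a = 1/2
          have hb' : f0 b = 1/2 := hb
          linarith
        exact closed_all G hconn _ hclosed hw0
      refine (bip_contra G hconn hE H (fun v => decide (f0 v < 1/2)) ?_).elim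
      intro u v huv
      have h1 := hadj_t u v huv
      have h2 := hallne u
      have h3 := hallne v
      simp only [ne_eq, decide_eq_decide]
      intro hiff
      rcases lt_or_ge (f0 u) (1/2) with h | h
      · have := hiff.1 h
        linarith
      · have hu : f0 u > 1/2 := lt_of_le_of_ne h (Ne.symm h2)
        have hv : ¬ (f0 v < 1/2) := fun hvv => by
          have := hiff.2 hvv
          linarith
        push_neg at hv
        have hv' : f0 v > 1/2 := lt_of_le_of_ne hv (Ne.symm h3)
        linarith
end

section
/- Let H = (V,E) be a hypergraph where E = E_1 ∪ E_2 with every edge in E_1 containing a common vertex u, and every edge in E_2 disjoint from all other edges (i.e., u is the only vertex in at least two edges). Let q ∈ {1,2}, and let (h_e)_{e∈E} be random variables with |h_e| ≤ 1 such that the collection (h_e)_{e ∈ E_2 ∪ {e'}} is mutually independent for any single e' ∈ E_1, and E[|h_e|^q | (h_{e''})_{e''∈E_2}] = E[|h_e|^q] = p^{w(e)} for each e ∈ E_1. Then, with e' = argmax_{e∈E_1} w(e) and e'' the second largest, E[∏_{e∈E} h_e] ≤ p^{(1−1/q)w(e'') + (1/q)w(e') + (1/q)∑_{e∈E_2} w(e)}.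 -/
open Finset MeasureTheory ProbabilityTheory

section AuxStmt15

variable {Ω : Type*} [MeasurableSpace Ω] {μ : Measure Ω} [IsProbabilityMeasure μ]

lemma aux_integrable15 {f : Ω → ℝ} (hf : Measurable f) (hbd : ∀ ω, |f ω| ≤ 1) :
    Integrable f μ :=
  (integrable_const (1:ℝ)).mono' hf.aestronglyMeasurable
    (Filter.Eventually.of_forall fun ω => by simpa [Real.norm_eq_abs] using hbd ω)

lemma aux_indep_prod15 {κ : Type*} (f : κ → Ω → ℝ) (hmeas : ∀ i, Measurable (f i))
    (hind : iIndepFun (m := fun _ : κ => (inferInstance : MeasurableSpace ℝ)) f μ)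
    (s : Finset κ) :
    ∫ ω, ∏ i ∈ s, f i ω ∂μ = ∏ i ∈ s, ∫ ω, f i ω ∂μ := by
  classical
  induction s using Finset.cons_induction with
  | empty => simp
  | cons a s ha ih =>
    have hprodmeas : Measurable (fun ω => ∏ i ∈ s, f i ω) :=
      Finset.measurable_prod _ fun i _ => hmeas i
    have h1 : IndepFun (f a) (fun ω => ∏ j ∈ s, f j ω) μ := by
      have := (hind.indepFun_finsetProd_of_notMem hmeas ha).symm
      simpa [Finset.prod_fn] using this
    simp only [Finset.prod_cons]
    rw [h1.integral_fun_mul_eq_mul_integral (hmeas a).aestronglyMeasurable hprodmeas.aestronglyMeasurable, ih]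

/-- Cauchy–Schwarz: `∫ |f| ≤ (∫ f²)^(1/2)` for bounded measurable `f`. -/
lemma aux_cs15 {f : Ω → ℝ} (hf : Measurable f) (hbd : ∀ ω, |f ω| ≤ 1) :
    ∫ ω, |f ω| ∂μ ≤ (∫ ω, |f ω| ^ 2 ∂μ) ^ ((1:ℝ)/2) := by
  have hpq : Real.HolderConjugate 2 2 := Real.HolderConjugate.two_two
  have hmem : MemLp (fun ω => |f ω|) (ENNReal.ofReal 2) μ :=
    MemLp.of_bound hf.abs.aestronglyMeasurable 1
      (Filter.Eventually.of_forall fun ω => by simpa [Real.norm_eq_abs, abs_abs] using hbd ω)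
  have hmem1 : MemLp (fun _ : Ω => (1:ℝ)) (ENNReal.ofReal 2) μ := memLp_const 1
  have := integral_mul_le_Lp_mul_Lq_of_nonneg hpq
    (Filter.Eventually.of_forall fun ω => abs_nonneg (f ω))
    (Filter.Eventually.of_forall fun _ => zero_le_one) hmem hmem1
  simp only [mul_one, one_pow] at this
  calc ∫ ω, |f ω| ∂μ
      ≤ (∫ ω, |f ω| ^ (2:ℝ) ∂μ) ^ ((1:ℝ)/2) * (∫ _ω, (1:ℝ) ^ (2:ℝ) ∂μ) ^ ((1:ℝ)/2) := by
        simpa using this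
    _ = (∫ ω, |f ω| ^ 2 ∂μ) ^ ((1:ℝ)/2) := by
        have h2 : ∀ x : ℝ, x ^ (2:ℝ) = x ^ 2 := fun x => by
          rw [show (2:ℝ) = ((2:ℕ):ℝ) by norm_num, Real.rpow_natCast]
        simp [h2]

end AuxStmt15

/-- Base case of the weights lemma: edges split into `S1` (all through a common vertex)
and `S2` (pairwise disjoint from everything else).  With the stated independence and
moment conditions, `E[∏_e h_e] ≤ p^{(1−1/q)w(e'') + (1/q)w(e') + (1/q)∑_{e∈S2} w(e)}`
where `e'` maximizes `w` over `S1` and `e''` is the second largest. -/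
theorem stmt15 {ι : Type*} [Fintype ι] [DecidableEq ι]
    (S1 S2 : Finset ι) (hdisj : Disjoint S1 S2) (hcover : S1 ∪ S2 = Finset.univ)
    (q : ℕ) (hq : q = 1 ∨ q = 2) (p : ℝ) (hp0 : 0 < p) (hp1 : p < 1)
    (w : ι → ℝ) (hw : ∀ e, 0 ≤ w e)
    {Ω : Type*} [MeasurableSpace Ω] (μ : Measure Ω) [IsProbabilityMeasure μ]
    (h : ι → Ω → ℝ) (hmeas : ∀ e, Measurable (h e))
    (hbd : ∀ e ω, |h e ω| ≤ 1)
    (hindep : ∀ e' ∈ S1,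
      iIndepFun (m := fun _ : {x // x ∈ insert e' S2} => (inferInstance : MeasurableSpace ℝ))
        (fun e : {x // x ∈ insert e' S2} => h e.1) μ)
    (hmom1 : ∀ e ∈ S1, ∫ ω, |h e ω| ^ q ∂μ = p ^ (w e))
    (hmom2 : ∀ e ∈ S2, ∫ ω, |h e ω| ^ q ∂μ ≤ p ^ (w e))
    (e' e'' : ι) (he' : e' ∈ S1) (he'' : e'' ∈ S1) (hne : e' ≠ e'')
    (hmax : ∀ e ∈ S1, w e ≤ w e')
    (hsecond : ∀ e ∈ S1, e ≠ e' → w e ≤ w e'') (hle : w e'' ≤ w e') :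
    ∫ ω, ∏ e, h e ω ∂μ ≤
      p ^ ((1 - 1 / (q : ℝ)) * w e'' + (1 / (q : ℝ)) * w e' +
        (1 / (q : ℝ)) * ∑ e ∈ S2, w e) := by
  classical
  set A : Ω → ℝ := fun ω => ∏ e ∈ S2, |h e ω| with hAdef
  have hAmeas : Measurable A := Finset.measurable_prod _ fun e _ => (hmeas e).abs
  have hA0 : ∀ ω, 0 ≤ A ω := fun ω => Finset.prod_nonneg fun e _ => abs_nonneg _
  have hA1 : ∀ ω, A ω ≤ 1 := fun ω =>
    Finset.prod_le_one (fun e _ => abs_nonneg _) (fun e _ => hbd e ω)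
  have haS2 : ∀ a ∈ S1, a ∉ S2 := fun a ha hmem => (Finset.disjoint_left.mp hdisj ha) hmem
  set P : ℝ := ∏ e ∈ S2, ∫ ω, |h e ω| ∂μ with hPdef
  have hP0 : 0 ≤ P := Finset.prod_nonneg fun e _ => integral_nonneg fun ω => abs_nonneg _
  -- key independence computation
  have keyC : ∀ a ∈ S1, ∀ r : ℕ,
      ∫ ω, |h a ω| ^ r * A ω ∂μ = (∫ ω, |h a ω| ^ r ∂μ) * P := by
    intro a ha r
    set g : ι → Ω → ℝ := fun i ω => |h i ω| ^ (if i = a then r else 1) with hgdef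
    have hgm : ∀ i, Measurable (g i) := fun i => (hmeas i).abs.pow_const _
    have hind' : iIndepFun
        (m := fun _ : {x // x ∈ insert a S2} => (inferInstance : MeasurableSpace ℝ))
        (fun i : {x // x ∈ insert a S2} => g i.1) μ :=
      (hindep a ha).comp (fun (i : {x // x ∈ insert a S2}) (x : ℝ) =>
          |x| ^ (if i.1 = a then r else 1))
        (fun i => measurable_abs.pow_const _)
    have hmain := aux_indep_prod15 (μ := μ) (fun i : {x // x ∈ insert a S2} => g i.1)
      (fun i => hgm i.1) hind' Finset.univ
    have hT : ∀ (F : ι → ℝ),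
        ∏ i : {x // x ∈ insert a S2}, F i.1 = F a * ∏ e ∈ S2, F e := by
      intro F
      rw [Finset.prod_coe_sort (insert a S2) F, Finset.prod_insert (haS2 a ha)]
    have hga : ∀ ω, g a ω = |h a ω| ^ r := by intro ω; simp [hgdef]
    have hgS2 : ∀ e ∈ S2, ∀ ω, g e ω = |h e ω| := by
      intro e hx ω
      have hxa : e ≠ a := fun hxe => haS2 a ha (hxe ▸ hx)
      simp [hgdef, hxa]
    have hL : ∫ ω, ∏ i : {x // x ∈ insert a S2}, g i.1 ω ∂μ
        = ∫ ω, |h a ω| ^ r * A ω ∂μ := by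
      refine integral_congr_ae (Filter.Eventually.of_forall fun ω => ?_)
      show ∏ i : {x // x ∈ insert a S2}, g i.1 ω = |h a ω| ^ r * A ω
      rw [hT (fun i => g i ω), hga ω]
      exact congrArg _ (Finset.prod_congr rfl fun x hx => hgS2 x hx ω)
    have hR : ∏ i : {x // x ∈ insert a S2}, ∫ ω, g i.1 ω ∂μ
        = (∫ ω, |h a ω| ^ r ∂μ) * P := by
      rw [hT (fun i => ∫ ω, g i ω ∂μ)]
      congr 1
      · exact integral_congr_ae (Filter.Eventually.of_forall fun ω => hga ω)
      · exact Finset.prod_congr rfl fun x hx =>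
          integral_congr_ae (Filter.Eventually.of_forall fun ω => hgS2 x hx ω)
    rw [← hL, ← hR]
    simpa using hmain
  -- pointwise bound
  have hpoint : ∀ ω, ∏ e, h e ω ≤ |h e' ω| * |h e'' ω| * A ω := by
    intro ω
    calc ∏ e, h e ω ≤ |∏ e, h e ω| := le_abs_self _
      _ = ∏ e, |h e ω| := Finset.abs_prod _ _
      _ = (∏ e ∈ S1, |h e ω|) * A ω := by
          rw [hAdef, ← Finset.prod_union hdisj, hcover]
      _ ≤ (|h e' ω| * |h e'' ω|) * A ω := by
          refine mul_le_mul_of_nonneg_right ?_ (hA0 ω)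
          have hsub : ({e', e''} : Finset ι) ⊆ S1 := by
            intro x hx
            rcases Finset.mem_insert.mp hx with rfl | hx
            · exact he'
            · rw [Finset.mem_singleton.mp hx]; exact he''
          rw [← Finset.prod_sdiff hsub, Finset.prod_pair hne]
          exact mul_le_of_le_one_left (mul_nonneg (abs_nonneg _) (abs_nonneg _))
            (Finset.prod_le_one (fun e _ => abs_nonneg _) (fun e _ => hbd e ω))
  have hIntProd : Integrable (fun ω => ∏ e, h e ω) μ :=
    aux_integrable15 (Finset.measurable_prod _ fun e _ => hmeas e)
      (fun ω => by
        rw [Finset.abs_prod]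
        exact Finset.prod_le_one (fun e _ => abs_nonneg _) (fun e _ => hbd e ω))
  rcases hq with rfl | rfl
  · -- q = 1
    have htgt : (1 - 1 / ((1:ℕ) : ℝ)) * w e'' + (1 / ((1:ℕ) : ℝ)) * w e' +
        (1 / ((1:ℕ) : ℝ)) * ∑ e ∈ S2, w e = w e' + ∑ e ∈ S2, w e := by
      push_cast; ring
    rw [htgt]
    have hInt2 : Integrable (fun ω => |h e' ω| ^ 1 * A ω) μ :=
      aux_integrable15 (((hmeas e').abs.pow_const _).mul hAmeas)
        (fun ω => by
          rw [abs_of_nonneg (by positivity)]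
          exact mul_le_one₀ (by simpa using hbd e' ω) (hA0 ω) (hA1 ω))
    calc ∫ ω, ∏ e, h e ω ∂μ
        ≤ ∫ ω, |h e' ω| ^ 1 * A ω ∂μ := by
          refine integral_mono hIntProd hInt2 fun ω => ?_
          calc ∏ e, h e ω ≤ |h e' ω| * |h e'' ω| * A ω := hpoint ω
            _ ≤ |h e' ω| * 1 * A ω := by
                refine mul_le_mul_of_nonneg_right ?_ (hA0 ω)
                exact mul_le_mul_of_nonneg_left (hbd e'' ω) (abs_nonneg _)
            _ = |h e' ω| ^ 1 * A ω := by ring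
      _ = (∫ ω, |h e' ω| ^ 1 ∂μ) * P := keyC e' he' 1
      _ ≤ p ^ (w e') * ∏ e ∈ S2, p ^ (w e) := by
          rw [hmom1 e' he']
          refine mul_le_mul_of_nonneg_left ?_ (le_of_lt (Real.rpow_pos_of_pos hp0 _))
          exact Finset.prod_le_prod (fun e _ => integral_nonneg fun ω => abs_nonneg _)
            (fun e he => by simpa [pow_one] using hmom2 e he)
      _ = p ^ (w e' + ∑ e ∈ S2, w e) := by
          rw [Real.rpow_add hp0, Real.rpow_sum_of_pos hp0]
  · -- q = 2
    set t : ℝ := (∑ e ∈ S2, w e) / 2 with htdef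
    have h2cast : ∀ x : ℝ, x ^ (2:ℝ) = x ^ 2 := fun x => by
      rw [show (2:ℝ) = ((2:ℕ):ℝ) by norm_num, Real.rpow_natCast]
    -- each S2 integral is at most p^(w e / 2)
    have hS2le : ∀ e ∈ S2, ∫ ω, |h e ω| ∂μ ≤ p ^ (w e / 2) := by
      intro e he
      calc ∫ ω, |h e ω| ∂μ ≤ (∫ ω, |h e ω| ^ 2 ∂μ) ^ ((1:ℝ)/2) :=
            aux_cs15 (hmeas e) (hbd e)
        _ ≤ (p ^ (w e)) ^ ((1:ℝ)/2) :=
            Real.rpow_le_rpow (integral_nonneg fun ω => by positivity) (hmom2 e he)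
              (by norm_num)
        _ = p ^ (w e / 2) := by
            rw [← Real.rpow_mul hp0.le]
            congr 1
            ring
    have hPle : P ≤ p ^ t := by
      calc P ≤ ∏ e ∈ S2, p ^ (w e / 2) :=
            Finset.prod_le_prod (fun e _ => integral_nonneg fun ω => abs_nonneg _) hS2le
        _ = p ^ t := by
            rw [htdef, ← Real.rpow_sum_of_pos hp0, Finset.sum_div]
    -- Cauchy-Schwarz setup
    set F : Ω → ℝ := fun ω => |h e' ω| * Real.sqrt (A ω) with hFdef
    set G : Ω → ℝ := fun ω => |h e'' ω| * Real.sqrt (A ω) with hGdef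
    have hFmeas : Measurable F := (hmeas e').abs.mul (Real.continuous_sqrt.measurable.comp hAmeas)
    have hGmeas : Measurable G := (hmeas e'').abs.mul (Real.continuous_sqrt.measurable.comp hAmeas)
    have hF0 : ∀ ω, 0 ≤ F ω := fun ω => mul_nonneg (abs_nonneg _) (Real.sqrt_nonneg _)
    have hG0 : ∀ ω, 0 ≤ G ω := fun ω => mul_nonneg (abs_nonneg _) (Real.sqrt_nonneg _)
    have hF1 : ∀ ω, F ω ≤ 1 := fun ω =>
      mul_le_one₀ (hbd e' ω) (Real.sqrt_nonneg _) (Real.sqrt_le_one.mpr (hA1 ω))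
    have hG1 : ∀ ω, G ω ≤ 1 := fun ω =>
      mul_le_one₀ (hbd e'' ω) (Real.sqrt_nonneg _) (Real.sqrt_le_one.mpr (hA1 ω))
    have hFG : ∀ ω, F ω * G ω = |h e' ω| * |h e'' ω| * A ω := by
      intro ω
      have : F ω * G ω = |h e' ω| * |h e'' ω| * (Real.sqrt (A ω) * Real.sqrt (A ω)) := by
        rw [hFdef, hGdef]; ring
      rw [this, Real.mul_self_sqrt (hA0 ω)]
    have hIntFG : Integrable (fun ω => F ω * G ω) μ :=
      aux_integrable15 (hFmeas.mul hGmeas)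
        (fun ω => by
          rw [abs_of_nonneg (mul_nonneg (hF0 ω) (hG0 ω))]
          exact mul_le_one₀ (hF1 ω) (hG0 ω) (hG1 ω))
    have hpq : Real.HolderConjugate 2 2 := Real.HolderConjugate.two_two
    have hmemF : MemLp F (ENNReal.ofReal 2) μ :=
      MemLp.of_bound hFmeas.aestronglyMeasurable 1
        (Filter.Eventually.of_forall fun ω => by
          rw [Real.norm_eq_abs, abs_of_nonneg (hF0 ω)]; exact hF1 ω)
    have hmemG : MemLp G (ENNReal.ofReal 2) μ :=
      MemLp.of_bound hGmeas.aestronglyMeasurable 1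
        (Filter.Eventually.of_forall fun ω => by
          rw [Real.norm_eq_abs, abs_of_nonneg (hG0 ω)]; exact hG1 ω)
    have hcs := integral_mul_le_Lp_mul_Lq_of_nonneg hpq
      (Filter.Eventually.of_forall hF0) (Filter.Eventually.of_forall hG0) hmemF hmemG
    -- compute the squares
    have hFsq : ∫ ω, F ω ^ (2:ℝ) ∂μ = p ^ (w e') * P := by
      have : ∫ ω, F ω ^ (2:ℝ) ∂μ = ∫ ω, |h e' ω| ^ 2 * A ω ∂μ := by
        refine integral_congr_ae (Filter.Eventually.of_forall fun ω => ?_)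
        show F ω ^ (2:ℝ) = |h e' ω| ^ 2 * A ω
        rw [h2cast, hFdef]
        simp only
        rw [mul_pow, Real.sq_sqrt (hA0 ω)]
      rw [this, keyC e' he' 2, hmom1 e' he']
    have hGsq : ∫ ω, G ω ^ (2:ℝ) ∂μ = p ^ (w e'') * P := by
      have : ∫ ω, G ω ^ (2:ℝ) ∂μ = ∫ ω, |h e'' ω| ^ 2 * A ω ∂μ := by
        refine integral_congr_ae (Filter.Eventually.of_forall fun ω => ?_)
        show G ω ^ (2:ℝ) = |h e'' ω| ^ 2 * A ω
        rw [h2cast, hGdef]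
        simp only
        rw [mul_pow, Real.sq_sqrt (hA0 ω)]
      rw [this, keyC e'' he'' 2, hmom1 e'' he'']
    have htgt : (1 - 1 / ((2:ℕ) : ℝ)) * w e'' + (1 / ((2:ℕ) : ℝ)) * w e' +
        (1 / ((2:ℕ) : ℝ)) * ∑ e ∈ S2, w e
        = (w e' + t) * (1/2) + (w e'' + t) * (1/2) := by
      rw [htdef]; push_cast; ring
    rw [htgt, Real.rpow_add hp0]
    calc ∫ ω, ∏ e, h e ω ∂μ
        ≤ ∫ ω, F ω * G ω ∂μ := by
          refine integral_mono hIntProd hIntFG fun ω => ?_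
          rw [hFG ω]; exact hpoint ω
      _ ≤ (∫ ω, F ω ^ (2:ℝ) ∂μ) ^ ((1:ℝ)/2) * (∫ ω, G ω ^ (2:ℝ) ∂μ) ^ ((1:ℝ)/2) := hcs
      _ ≤ (p ^ (w e' + t)) ^ ((1:ℝ)/2) * (p ^ (w e'' + t)) ^ ((1:ℝ)/2) := by
          have hb1 : ∫ ω, F ω ^ (2:ℝ) ∂μ ≤ p ^ (w e' + t) := by
            rw [hFsq, Real.rpow_add hp0]
            exact mul_le_mul_of_nonneg_left hPle (le_of_lt (Real.rpow_pos_of_pos hp0 _))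
          have hb2 : ∫ ω, G ω ^ (2:ℝ) ∂μ ≤ p ^ (w e'' + t) := by
            rw [hGsq, Real.rpow_add hp0]
            exact mul_le_mul_of_nonneg_left hPle (le_of_lt (Real.rpow_pos_of_pos hp0 _))
          have hF2nn : 0 ≤ ∫ ω, F ω ^ (2:ℝ) ∂μ :=
            integral_nonneg fun ω => Real.rpow_nonneg (hF0 ω) _
          have hG2nn : 0 ≤ ∫ ω, G ω ^ (2:ℝ) ∂μ :=
            integral_nonneg fun ω => Real.rpow_nonneg (hG0 ω) _
          exact mul_le_mul (Real.rpow_le_rpow hF2nn hb1 (by norm_num))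
            (Real.rpow_le_rpow hG2nn hb2 (by norm_num))
            (Real.rpow_nonneg hG2nn _) (Real.rpow_nonneg (Real.rpow_pos_of_pos hp0 _).le _)
      _ = p ^ ((w e' + t) * (1/2)) * p ^ ((w e'' + t) * (1/2)) := by
          rw [← Real.rpow_mul hp0.le, ← Real.rpow_mul hp0.le]
end

section
/- Let n, T, c ∈ ℕ with T ≤ n/10 and c ≥ 1, and suppose β : {0,…,n} → [0,∞) satisfies ∑_{k=0}^n C(n,k)·β_k ≤ A·2^c for some A ≥ 1. Then ∑_{k=c+1}^{T} C(T,k)·β_k^μ ≤ A·(2eT/n)^c for any μ ≥ 1, provided β_k ≤ 1 for all k. In particular this is at most A·2^{−c}. -/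
open Finset

lemma df_le (T n : ℕ) (h : T ≤ n) : ∀ k, T.descFactorial k * n ^ k ≤ n.descFactorial k * T ^ k := by
  intro k
  induction k with
  | zero => simp
  | succ k ih =>
    have h1 : (T - k) * n ≤ (n - k) * T := by
      rw [Nat.sub_mul, Nat.sub_mul, Nat.mul_comm n T]
      exact Nat.sub_le_sub_left (Nat.mul_le_mul_left k h) _
    calc T.descFactorial (k+1) * n ^ (k+1)
        = ((T - k) * n) * (T.descFactorial k * n ^ k) := by
          rw [Nat.descFactorial_succ]; ring
      _ ≤ ((n - k) * T) * (n.descFactorial k * T ^ k) := Nat.mul_le_mul h1 ih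
      _ = n.descFactorial (k+1) * T ^ (k+1) := by
          rw [Nat.descFactorial_succ]; ring

lemma choose_mul_pow_le (T n k : ℕ) (h : T ≤ n) :
    T.choose k * n ^ k ≤ n.choose k * T ^ k := by
  have := df_le T n h k
  rw [Nat.descFactorial_eq_factorial_mul_choose, Nat.descFactorial_eq_factorial_mul_choose] at this
  have hk : 0 < Nat.factorial k := Nat.factorial_pos k
  rw [Nat.mul_assoc, Nat.mul_assoc] at this
  exact Nat.le_of_mul_le_mul_left this hk

/-- The high-weight terms estimate: if `T ≤ n/10`, `c ≥ 1`, `0 ≤ β_k ≤ 1`, `μ ≥ 1`, and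
`∑_{k=0}^n C(n,k) β_k ≤ A·2^c` with `A ≥ 1`, then
`∑_{k=c+1}^T C(T,k) β_k^μ ≤ A (2eT/n)^c`, and in particular it is at most `A·2^{−c}`. -/
theorem stmt17 (n T c : ℕ) (hT : 10 * T ≤ n) (hc : 1 ≤ c)
    (A μ : ℝ) (hA : 1 ≤ A) (hμ : 1 ≤ μ)
    (β : ℕ → ℝ) (hβ0 : ∀ k, 0 ≤ β k) (hβ1 : ∀ k, β k ≤ 1)
    (hsum : ∑ k ∈ range (n + 1), (n.choose k : ℝ) * β k ≤ A * 2 ^ c) :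
    (∑ k ∈ Icc (c + 1) T, (T.choose k : ℝ) * β k ^ μ ≤
        A * (2 * Real.exp 1 * T / n) ^ c) ∧
      ∑ k ∈ Icc (c + 1) T, (T.choose k : ℝ) * β k ^ μ ≤ A * 2 ^ (-(c : ℤ)) := by
  have hA0 : (0:ℝ) ≤ A := le_trans zero_le_one hA
  rcases Nat.eq_zero_or_pos n with hn | hn
  · have hT0 : T = 0 := by omega
    subst hn hT0
    have hempty : Icc (c + 1) 0 = (∅ : Finset ℕ) := by
      apply Icc_eq_empty; omega
    rw [hempty]
    simp only [sum_empty]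
    constructor
    · have : (2 * Real.exp 1 * (0:ℕ) / (0:ℕ) : ℝ) = 0 := by norm_num
      rw [this, zero_pow (by omega : c ≠ 0), mul_zero]
    · positivity
  have hn0 : (0:ℝ) < n := by exact_mod_cast hn
  have hTn : T ≤ n := by omega
  have hr0 : (0:ℝ) ≤ (T:ℝ) / n := by positivity
  have hr1 : (T:ℝ) / n ≤ 1 := by
    rw [div_le_one hn0]; exact_mod_cast hTn
  -- termwise bound
  have key : ∀ k ∈ Icc (c + 1) T,
      (T.choose k : ℝ) * β k ^ μ ≤ ((T:ℝ)/n) ^ (c+1) * ((n.choose k : ℝ) * β k) := by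
    intro k hk
    rw [mem_Icc] at hk
    have h1 : β k ^ μ ≤ β k := by
      rcases eq_or_lt_of_le (hβ0 k) with h | h
      · rw [← h, Real.zero_rpow (by linarith : μ ≠ 0)]
      · calc β k ^ μ ≤ β k ^ (1:ℝ) :=
              Real.rpow_le_rpow_of_exponent_ge h (hβ1 k) hμ
          _ = β k := Real.rpow_one _
    have h2 : (T.choose k : ℝ) ≤ (n.choose k : ℝ) * ((T:ℝ)/n) ^ k := by
      rw [div_pow, ← mul_div_assoc, le_div_iff₀ (by positivity)]
      exact_mod_cast choose_mul_pow_le T n k hTn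
    have h3 : ((T:ℝ)/n) ^ k ≤ ((T:ℝ)/n) ^ (c+1) :=
      pow_le_pow_of_le_one hr0 hr1 hk.1
    have hb0 : (0:ℝ) ≤ β k ^ μ := Real.rpow_nonneg (hβ0 k) μ
    calc (T.choose k : ℝ) * β k ^ μ
        ≤ ((n.choose k : ℝ) * ((T:ℝ)/n) ^ k) * β k := by
          apply mul_le_mul h2 h1 hb0 (by positivity)
      _ ≤ ((n.choose k : ℝ) * ((T:ℝ)/n) ^ (c+1)) * β k := by
          apply mul_le_mul_of_nonneg_right _ (hβ0 k)
          exact mul_le_mul_of_nonneg_left h3 (Nat.cast_nonneg _)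
      _ = ((T:ℝ)/n) ^ (c+1) * ((n.choose k : ℝ) * β k) := by ring
  have hsub : Icc (c + 1) T ⊆ range (n + 1) := by
    intro k hk; rw [mem_Icc] at hk; rw [mem_range]; omega
  have step : ∑ k ∈ Icc (c + 1) T, (T.choose k : ℝ) * β k ^ μ ≤
      ((T:ℝ)/n) ^ (c+1) * (A * 2 ^ c) := by
    calc ∑ k ∈ Icc (c + 1) T, (T.choose k : ℝ) * β k ^ μ
        ≤ ∑ k ∈ Icc (c + 1) T, ((T:ℝ)/n) ^ (c+1) * ((n.choose k : ℝ) * β k) :=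
          sum_le_sum key
      _ = ((T:ℝ)/n) ^ (c+1) * ∑ k ∈ Icc (c + 1) T, ((n.choose k : ℝ) * β k) := by
          rw [mul_sum]
      _ ≤ ((T:ℝ)/n) ^ (c+1) * ∑ k ∈ range (n+1), ((n.choose k : ℝ) * β k) := by
          apply mul_le_mul_of_nonneg_left _ (by positivity)
          apply sum_le_sum_of_subset_of_nonneg hsub
          intro i _ _; exact mul_nonneg (Nat.cast_nonneg _) (hβ0 i)
      _ ≤ ((T:ℝ)/n) ^ (c+1) * (A * 2 ^ c) := by
          apply mul_le_mul_of_nonneg_left hsum (by positivity)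
  have step2 : ((T:ℝ)/n) ^ (c+1) * (A * 2 ^ c) ≤ A * (2 * (T:ℝ) / n) ^ c := by
    have : ((T:ℝ)/n) ^ (c+1) * (A * 2 ^ c) = (A * (2 * (T:ℝ) / n) ^ c) * ((T:ℝ)/n) := by
      field_simp
      linear_combination (((T:ℝ)/n)^c*2^c) * (mul_div_cancel₀ (T:ℝ) hn0.ne')
    rw [this]
    nth_rewrite 2 [← mul_one (A * (2 * (T:ℝ) / n) ^ c)]
    exact mul_le_mul_of_nonneg_left hr1 (by positivity)
  have main : ∑ k ∈ Icc (c + 1) T, (T.choose k : ℝ) * β k ^ μ ≤ A * (2 * (T:ℝ) / n) ^ c :=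
    le_trans step step2
  constructor
  · refine le_trans main ?_
    apply mul_le_mul_of_nonneg_left _ hA0
    apply pow_le_pow_left₀ (by positivity)
    have he : (1:ℝ) ≤ Real.exp 1 := by
      linarith [Real.add_one_le_exp (1:ℝ)]
    gcongr
    nlinarith [he, Nat.cast_nonneg (α := ℝ) T]
  · refine le_trans main ?_
    apply mul_le_mul_of_nonneg_left _ hA0
    rw [zpow_neg, zpow_natCast, ← inv_pow]
    apply pow_le_pow_left₀ (by positivity)
    rw [div_le_iff₀ hn0]
    have h4 : (4:ℝ) * T ≤ n := by exact_mod_cast (by omega : 4 * T ≤ n)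
    norm_num
    linarith
end
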